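/- arXiv:1803.09186 — 3 statements merged into one kernel-verified Lean document; each statement's English description precedes it below -/
import Mathlib

section
/- Let g, g̃ ∈ ℝ^{r−1} with δ := g − g̃ and ‖δ‖₂ ≤ ε, let Θ̃ = {R̃, M̃, Ñ, L̃} satisfy the SLS constraints for the estimated plant (Z, e₁, g̃ᵀ), and suppose α > 0 satisfies εα‖Ñ‖ + ‖[1 + g̃ᵀÑ; L̃]‖ ≤ α (which implies ε‖Ñ‖ < 1 and hence ‖Ñδᵀ‖ < 1). Let Θ̂ be the perturbed response [[R̂, N̂],[M̂, L̂]] = [[R̃, Ñ],[M̃, L̃]] + (1 − δᵀÑ)⁻¹·[Ñδᵀ; L̃δᵀ]·[R̃, Ñ]. Then J(g, Θ̂) ≤ J(g̃, Θ̃) + εα‖R̃B₁ + ÑD₂₁‖ = Q(g̃, Θ̃, α). -/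
/- Preliminaries: transfer functions as real rational functions, RH∞, H∞ norms,
   System-Level Synthesis (SLS) constraints, controllers, closed-loop responses,
   coarse-grained identification, Gaussian vectors. -/

noncomputable section
open scoped Matrix BigOperators ENNReal
open MeasureTheory ProbabilityTheory Polynomial

namespace SLS

/-- Scalar transfer functions: real rational functions in `z`. -/
abbrev TF : Type := RatFunc ℝ

/-- Transfer matrices. -/
abbrev TMat (m n : ℕ) : Type := Matrix (Fin m) (Fin n) TF

/-- Embed a real matrix as a (constant) transfer matrix. -/
def rmap {m n : ℕ} (A : Matrix (Fin m) (Fin n) ℝ) : TMat m n := A.map RatFunc.C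

/-- Evaluate a scalar transfer function at a complex point. -/
def evalTF (f : TF) (z : ℂ) : ℂ :=
  (f.num.map (algebraMap ℝ ℂ)).eval z / (f.denom.map (algebraMap ℝ ℂ)).eval z

/-- Evaluate a transfer matrix at a complex point. -/
def evalMat {m n : ℕ} (F : TMat m n) (z : ℂ) : Matrix (Fin m) (Fin n) ℂ :=
  Matrix.of fun i j => evalTF (F i j) z

/-- Spectral norm (ℓ2 → ℓ2 operator norm) of a matrix over `ℝ` or `ℂ`. -/
def specNorm {𝕜 : Type} [RCLike 𝕜] {m n : ℕ} (M : Matrix (Fin m) (Fin n) 𝕜) : ℝ :=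
  ‖LinearMap.toContinuousLinearMap (Matrix.toEuclideanLin M)‖

/-- H∞ norm of a transfer matrix: sup over the unit circle of the spectral norm. -/
def hinfNorm {m n : ℕ} (F : TMat m n) : ℝ :=
  sSup {x : ℝ | ∃ z : ℂ, ‖z‖ = 1 ∧ x = specNorm (evalMat F z)}

/-- H∞ norm of a scalar transfer function. -/
def hinfNormTF (f : TF) : ℝ :=
  sSup {x : ℝ | ∃ z : ℂ, ‖z‖ = 1 ∧ x = ‖evalTF f z‖}

/-- A scalar transfer function is proper if its numerator degree does not exceed
its denominator degree. -/
def ProperTF (f : TF) : Prop := f.num.degree ≤ f.denom.degree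

/-- Strictly proper: vanishes at `z = ∞`. -/
def StrictlyProperTF (f : TF) : Prop := f.num.degree < f.denom.degree

/-- Stable: all poles lie strictly inside the open unit disk. -/
def StableTF (f : TF) : Prop :=
  ∀ z : ℂ, (f.denom.map (algebraMap ℝ ℂ)).eval z = 0 → ‖z‖ < 1

/-- Membership in RH∞ for scalar transfer functions: proper and stable. -/
def MemRHinfTF (f : TF) : Prop := ProperTF f ∧ StableTF f

/-- Membership in RH∞ for transfer matrices (entrywise). -/
def MemRHinf {m n : ℕ} (F : TMat m n) : Prop := ∀ i j, MemRHinfTF (F i j)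

/-- Strict properness of a transfer matrix (entrywise). -/
def StrictlyProper {m n : ℕ} (F : TMat m n) : Prop := ∀ i j, StrictlyProperTF (F i j)

/-- The transfer matrix `zI - A` for a real matrix `A`. -/
def zIA {n : ℕ} (A : Matrix (Fin n) (Fin n) ℝ) : TMat n n :=
  Matrix.diagonal (fun _ => (RatFunc.X : TF)) - rmap A

/-- A system response `Θ = {R, M, N, L}` for a plant with `n` states, `p` control
inputs and `q` measured outputs. -/
structure Response (n p q : ℕ) where
  R : TMat n n
  M : TMat p n
  N : TMat n q
  L : TMat p q

/-- The stability part of the SLS constraints: `R, M, N` strictly proper in RH∞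
and `L ∈ RH∞`. -/
def SLSStable {n p q : ℕ} (Θ : Response n p q) : Prop :=
  StrictlyProper Θ.R ∧ StrictlyProper Θ.M ∧ StrictlyProper Θ.N ∧
  MemRHinf Θ.R ∧ MemRHinf Θ.M ∧ MemRHinf Θ.N ∧ MemRHinf Θ.L

/-- The SLS constraints for the plant `(A, B₂, C₂)`:
`[zI − A, −B₂]·[[R, N],[M, L]] = [I, 0]`, `[[R, N],[M, L]]·[zI − A; −C₂] = [I; 0]`,
written blockwise, together with the stability conditions. -/
def SLSConstraints {n p q : ℕ} (A : Matrix (Fin n) (Fin n) ℝ)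
    (B₂ : Matrix (Fin n) (Fin p) ℝ) (C₂ : Matrix (Fin q) (Fin n) ℝ)
    (Θ : Response n p q) : Prop :=
  zIA A * Θ.R - rmap B₂ * Θ.M = 1 ∧
  zIA A * Θ.N - rmap B₂ * Θ.L = 0 ∧
  Θ.R * zIA A - Θ.N * rmap C₂ = 1 ∧
  Θ.M * zIA A - Θ.L * rmap C₂ = 0 ∧
  SLSStable Θ

/-- The robust SLS constraints with perturbations `(Δ₁, Δ₂)`: the second block
equation becomes `[[R, N],[M, L]]·[zI − A; −C₂] = [I + Δ₁; Δ₂]`. -/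
def RobustSLSConstraints {n p q : ℕ} (A : Matrix (Fin n) (Fin n) ℝ)
    (B₂ : Matrix (Fin n) (Fin p) ℝ) (C₂ : Matrix (Fin q) (Fin n) ℝ)
    (Δ₁ : TMat n n) (Δ₂ : TMat p n) (Θ : Response n p q) : Prop :=
  zIA A * Θ.R - rmap B₂ * Θ.M = 1 ∧
  zIA A * Θ.N - rmap B₂ * Θ.L = 0 ∧
  Θ.R * zIA A - Θ.N * rmap C₂ = 1 + Δ₁ ∧
  Θ.M * zIA A - Θ.L * rmap C₂ = Δ₂ ∧
  SLSStable Θ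

/-- The controller `K = L − M R⁻¹ N` induced by a system response. -/
def controller {n p q : ℕ} (Θ : Response n p q) : TMat p q :=
  Θ.L - Θ.M * Θ.R⁻¹ * Θ.N

/-- `K` achieves the closed-loop response `Θ'` on the plant `(A, B₂, C₂)`: in the
feedback loop `x = (zI − A)⁻¹(B₂u + δx)`, `y = C₂x + δy`, `u = Ky`, the transfer
matrices from `(δx, δy)` to `(x, u)` equal `[[R', N'],[M', L']]`. -/
def Achieves {n p q : ℕ} (A : Matrix (Fin n) (Fin n) ℝ)
    (B₂ : Matrix (Fin n) (Fin p) ℝ) (C₂ : Matrix (Fin q) (Fin n) ℝ)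
    (K : TMat p q) (Θ' : Response n p q) : Prop :=
  zIA A * Θ'.R = rmap B₂ * Θ'.M + 1 ∧
  zIA A * Θ'.N = rmap B₂ * Θ'.L ∧
  Θ'.M = K * rmap C₂ * Θ'.R ∧
  Θ'.L = K * rmap C₂ * Θ'.N + K

/-- `K` internally stabilizes the plant `(A, B₂, C₂)`: the four closed-loop
transfer matrices exist, `R', M', N'` are strictly proper, and all four lie in RH∞. -/
def InternallyStabilizes {n p q : ℕ} (A : Matrix (Fin n) (Fin n) ℝ)
    (B₂ : Matrix (Fin n) (Fin p) ℝ) (C₂ : Matrix (Fin q) (Fin n) ℝ)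
    (K : TMat p q) : Prop :=
  ∃ Θ' : Response n p q, Achieves A B₂ C₂ K Θ' ∧ SLSStable Θ'

/-! ### FIR SISO plants -/

/-- The down-shift matrix (ones on the subdiagonal). -/
def shiftMat (n : ℕ) : Matrix (Fin n) (Fin n) ℝ :=
  Matrix.of fun i j => if (i : ℕ) = (j : ℕ) + 1 then 1 else 0

/-- The first standard basis vector, as a column matrix. -/
def e1 (n : ℕ) : Matrix (Fin n) (Fin 1) ℝ :=
  Matrix.of fun i _ => if (i : ℕ) = 0 then 1 else 0

/-- A vector as a row matrix (`gᵀ`). -/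
def rowVec {n : ℕ} (g : Fin n → ℝ) : Matrix (Fin 1) (Fin n) ℝ :=
  Matrix.of fun _ j => g j

/-- The matrix `C₁ = [gᵀ; 0]`. -/
def C1mat {n : ℕ} (g : Fin n → ℝ) : Matrix (Fin 2) (Fin n) ℝ :=
  Matrix.of fun i j => if (i : ℕ) = 0 then g j else 0

/-- The matrix `D₁₂ = [0; 1]`. -/
def D12mat : Matrix (Fin 2) (Fin 1) ℝ :=
  Matrix.of fun i _ => if (i : ℕ) = 1 then 1 else 0

/-- Stack two scalar transfer functions into a 2×1 transfer matrix `[a; b]`. -/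
def col2 (a b : TF) : TMat 2 1 :=
  Matrix.of fun i _ => if (i : ℕ) = 0 then a else b

/-- The H∞ cost `J(g, Θ) = ‖[C₁, D₁₂]·[[R, N],[M, L]]·[B₁; D₂₁] + D₁₁‖` of a
system response for the generalized plant built from FIR coefficients `g`. -/
def cost {n nw : ℕ} (g : Fin n → ℝ) (B₁ : Matrix (Fin n) (Fin nw) ℝ)
    (D₂₁ : Matrix (Fin 1) (Fin nw) ℝ) (D₁₁ : Matrix (Fin 2) (Fin nw) ℝ)
    (Θ : Response n 1 1) : ℝ :=
  hinfNorm ((rmap (C1mat g) * Θ.R + rmap D12mat * Θ.M) * rmap B₁ +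
    (rmap (C1mat g) * Θ.N + rmap D12mat * Θ.L) * rmap D₂₁ + rmap D₁₁)

/-- The transfer matrix `[1 + g̃ᵀÑ; L̃]` and its H∞ norm. -/
def perfWeight {n : ℕ} (g : Fin n → ℝ) (Θ : Response n 1 1) : ℝ :=
  hinfNorm (col2 (1 + (rmap (rowVec g) * Θ.N) 0 0) (Θ.L 0 0))

/-- The robust SLS objective `Q(g̃, Θ̃, α) = J(g̃, Θ̃) + εα‖R̃B₁ + ÑD₂₁‖`. -/
def Qval {n nw : ℕ} (g : Fin n → ℝ) (B₁ : Matrix (Fin n) (Fin nw) ℝ)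
    (D₂₁ : Matrix (Fin 1) (Fin nw) ℝ) (D₁₁ : Matrix (Fin 2) (Fin nw) ℝ)
    (ε : ℝ) (Θ : Response n 1 1) (α : ℝ) : ℝ :=
  cost g B₁ D₂₁ D₁₁ Θ + ε * α * hinfNorm (Θ.R * rmap B₁ + Θ.N * rmap D₂₁)

/-- Feasibility for the robust SLS problem for the estimate `g̃` with uncertainty
parameter `ε`: `α > 0`, `Θ̃` satisfies the SLS constraints for `(Z, e₁, g̃ᵀ)`, and
`εα‖Ñ‖ + ‖[1 + g̃ᵀÑ; L̃]‖ ≤ α`. -/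
def RobustFeasible {n : ℕ} (g : Fin n → ℝ) (ε : ℝ) (Θ : Response n 1 1) (α : ℝ) : Prop :=
  0 < α ∧ SLSConstraints (shiftMat n) (e1 n) (rowVec g) Θ ∧
  ε * α * hinfNorm Θ.N + perfWeight g Θ ≤ α

/-- `(Θ̃, α)` is a minimizer of the robust SLS problem for `g̃`. -/
def RobustOptimal {n nw : ℕ} (g : Fin n → ℝ) (B₁ : Matrix (Fin n) (Fin nw) ℝ)
    (D₂₁ : Matrix (Fin 1) (Fin nw) ℝ) (D₁₁ : Matrix (Fin 2) (Fin nw) ℝ)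
    (ε : ℝ) (Θ : Response n 1 1) (α : ℝ) : Prop :=
  RobustFeasible g ε Θ α ∧
  ∀ Θ' α', RobustFeasible g ε Θ' α' → Qval g B₁ D₂₁ D₁₁ ε Θ α ≤ Qval g B₁ D₂₁ D₁₁ ε Θ' α'

/-- `Θ₀` is a minimizer of `J(g, ·)` over responses satisfying the SLS constraints
for the plant `(Z, e₁, gᵀ)`. -/
def OptimalResponse {n nw : ℕ} (g : Fin n → ℝ) (B₁ : Matrix (Fin n) (Fin nw) ℝ)
    (D₂₁ : Matrix (Fin 1) (Fin nw) ℝ) (D₁₁ : Matrix (Fin 2) (Fin nw) ℝ)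
    (Θ : Response n 1 1) : Prop :=
  SLSConstraints (shiftMat n) (e1 n) (rowVec g) Θ ∧
  ∀ Θ', SLSConstraints (shiftMat n) (e1 n) (rowVec g) Θ' →
    cost g B₁ D₂₁ D₁₁ Θ ≤ cost g B₁ D₂₁ D₁₁ Θ'

/-- The FIR transfer function `G(z) = Σ_{t=1}^{r−1} g_t z^{−t}` for
`g = (g₁, …, g_{r−1})`. -/
def firTF {n : ℕ} (g : Fin n → ℝ) : TF :=
  ∑ t : Fin n, RatFunc.C (g t) * (RatFunc.X)⁻¹ ^ ((t : ℕ) + 1)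

/-- The FIR transfer function `G(z) = Σ_{k=0}^{T−1} g_k z^{−k}` for a full
impulse-response vector `g_{0:T−1}`. -/
def firTF0 {T : ℕ} (g : Fin T → ℝ) : TF :=
  ∑ k : Fin T, RatFunc.C (g k) * (RatFunc.X)⁻¹ ^ (k : ℕ)

/-! ### Coarse-grained identification -/

/-- Euclidean (ℓ2) norm of a finite real vector. -/
def euclNorm {r : ℕ} (x : Fin r → ℝ) : ℝ := Real.sqrt (∑ i, x i ^ 2)

/-- ℓp norm of a finite real vector, `p ∈ [1, ∞]`. -/
def lpNorm {T : ℕ} (p : ℝ≥0∞) (x : Fin T → ℝ) : ℝ :=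
  if p = ∞ then ⨆ i, |x i| else (∑ i, |x i| ^ p.toReal) ^ (1 / p.toReal)

/-- `r^{2/max(p,2)}` as a real number. -/
def rExp (p : ℝ≥0∞) (r : ℕ) : ℝ := (r : ℝ) ^ ((2 / max p 2).toReal)

/-- The T×T lower-triangular Toeplitz matrix whose first column is `u`. -/
def toep {T : ℕ} (u : Fin T → ℝ) : Matrix (Fin T) (Fin T) ℝ :=
  Matrix.of fun i j =>
    if (j : ℕ) ≤ (i : ℕ) then u ⟨(i : ℕ) - (j : ℕ), lt_of_le_of_lt (Nat.sub_le _ _) i.isLt⟩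
    else 0

/-- The stacked input matrix `Z_mat = [Toep(u₁); …; Toep(u_m)]`. -/
def Zmat {T mE : ℕ} (u : Fin mE → Fin T → ℝ) : Matrix (Fin mE × Fin T) (Fin T) ℝ :=
  Matrix.of fun pr j => toep (u pr.1) pr.2 j

/-- `Z_matᵀ Z_mat`. -/
def ZtZ {T mE : ℕ} (u : Fin mE → Fin T → ℝ) : Matrix (Fin T) (Fin T) ℝ :=
  (Zmat u)ᵀ * Zmat u

/-- The least-squares estimate `g̃_{0:T−1} = (Z_matᵀZ_mat)⁻¹Z_matᵀ(y₁; …; y_m)`. -/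
def lsEst {T mE : ℕ} (u : Fin mE → Fin T → ℝ) (y : Fin mE → Fin T → ℝ) : Fin T → ℝ :=
  ((ZtZ u)⁻¹ * (Zmat u)ᵀ).mulVec fun pr => y pr.1 pr.2

/-- Pad the FIR coefficients `g = (g₁, …, g_{r−1})` to the impulse response
`g_{0:T−1} = (0, g₁, …, g_{r−1}, 0, …, 0)`. -/
def pad {r T : ℕ} (_ : r ≤ T) (g : Fin (r - 1) → ℝ) : Fin T → ℝ := fun k =>
  if hk : 1 ≤ (k : ℕ) ∧ (k : ℕ) < r then g ⟨(k : ℕ) - 1, by omega⟩ else 0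

/-- The estimated FIR coefficients `g̃ = (g̃₁, …, g̃_{r−1})` from coarse-grained
identification with true coefficients `g` and additive noise on the outputs. -/
def coarseEst {r T mE : ℕ} (hrT : r ≤ T) (u : Fin mE → Fin T → ℝ)
    (g : Fin (r - 1) → ℝ) (noise : Fin mE → Fin T → ℝ) : Fin (r - 1) → ℝ :=
  fun i =>
    lsEst u (fun k => (toep (u k)).mulVec (pad hrT g) + noise k)
      ⟨(i : ℕ) + 1, by have := i.isLt; omega⟩

/-! ### Gaussian random vectors -/

/-- The standard Gaussian measure on `Fin r → ℝ` (i.i.d. `N(0,1)` coordinates). -/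
def stdGaussianPi (r : ℕ) : Measure (Fin r → ℝ) :=
  Measure.pi fun _ => gaussianReal 0 1

/-- `δ` is a centered Gaussian random vector with covariance `Cov`: its law is the
pushforward of the standard Gaussian under some `A` with `AAᵀ = Cov`. -/
def IsCenteredGaussianVec {Ω : Type} [MeasurableSpace Ω] (P : Measure Ω) {r : ℕ}
    (δ : Ω → Fin r → ℝ) (Cov : Matrix (Fin r) (Fin r) ℝ) : Prop :=
  ∃ A : Matrix (Fin r) (Fin r) ℝ, A * Aᵀ = Cov ∧
    Measure.map δ P = Measure.map (fun x => A.mulVec x) (stdGaussianPi r)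

/-- The law of i.i.d. `N(0, σ²)` noise across `mE` experiments of length `T`. -/
def iidGaussianLaw (mE T : ℕ) (σ2 : ℝ) : Measure (Fin mE → Fin T → ℝ) :=
  Measure.pi fun _ => Measure.pi fun _ => gaussianReal 0 σ2.toNNReal


/-- Scalar multiplication of a transfer matrix by a scalar transfer function. -/
def sMulTF {m n : ℕ} (c : TF) (M : TMat m n) : TMat m n := Matrix.of fun i j => c * M i j

/-- The perturbed response `Θ̂` with `R̂ = (I+Δ₁)⁻¹R̃`, `M̂ = M̃ − Δ₂(I+Δ₁)⁻¹R̃`,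
`N̂ = (I+Δ₁)⁻¹Ñ`, `L̂ = L̃ − Δ₂(I+Δ₁)⁻¹Ñ` (with the rational matrix inverse). -/
def deltaPerturb {n p q : ℕ} (Δ₁ : TMat n n) (Δ₂ : TMat p n) (Θ : Response n p q) :
    Response n p q where
  R := (1 + Δ₁)⁻¹ * Θ.R
  M := Θ.M - Δ₂ * ((1 + Δ₁)⁻¹ * Θ.R)
  N := (1 + Δ₁)⁻¹ * Θ.N
  L := Θ.L - Δ₂ * ((1 + Δ₁)⁻¹ * Θ.N)

/-- The Sherman–Morrison form of the perturbed response in the FIR SISO case: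
`[[R̂, N̂],[M̂, L̂]] = [[R̃, Ñ],[M̃, L̃]] + (1 − δᵀÑ)⁻¹·[Ñδᵀ; L̃δᵀ]·[R̃, Ñ]`. -/
def smPerturb {n : ℕ} (δ : Fin n → ℝ) (Θ : Response n 1 1) : Response n 1 1 where
  R := Θ.R + sMulTF (1 - (rmap (rowVec δ) * Θ.N) 0 0)⁻¹ (Θ.N * rmap (rowVec δ) * Θ.R)
  M := Θ.M + sMulTF (1 - (rmap (rowVec δ) * Θ.N) 0 0)⁻¹ (Θ.L * rmap (rowVec δ) * Θ.R)
  N := Θ.N + sMulTF (1 - (rmap (rowVec δ) * Θ.N) 0 0)⁻¹ (Θ.N * rmap (rowVec δ) * Θ.N)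
  L := Θ.L + sMulTF (1 - (rmap (rowVec δ) * Θ.N) 0 0)⁻¹ (Θ.L * rmap (rowVec δ) * Θ.N)

/-- The block-diagonal matrix with `m` copies of `Toep(g)` on the diagonal
(the action of `Toep(g)` on the stacked process noise of `m` experiments). -/
def bigToep {T mE : ℕ} (g : Fin T → ℝ) : Matrix (Fin mE × Fin T) (Fin mE × Fin T) ℝ :=
  Matrix.of fun pr qr => if pr.1 = qr.1 then toep g pr.2 qr.2 else 0

end SLS

open SLS

namespace S9
open SLS RatFunc

noncomputable section

local notation "mc" => algebraMap ℝ ℂ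

/-- Denominator does not vanish at `z`. -/
def Good (f : TF) (z : ℂ) : Prop := (f.denom.map mc).eval z ≠ 0

lemma evalTF_eq (f : TF) (z : ℂ) : evalTF f z = RatFunc.eval mc z f := by
  simp [evalTF, RatFunc.eval, Polynomial.eval₂_eq_eval_map]

lemma good_iff (f : TF) (z : ℂ) :
    Good f z ↔ Polynomial.eval₂ mc z f.denom ≠ 0 := by
  rw [Polynomial.eval₂_eq_eval_map]; rfl

lemma good_of_dvd {f : TF} {p : Polynomial ℝ} {z : ℂ} (h : f.denom ∣ p)
    (hp : (p.map mc).eval z ≠ 0) : Good f z := by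
  intro h0
  obtain ⟨q, rfl⟩ := h
  rw [Polynomial.map_mul, Polynomial.eval_mul, h0, zero_mul] at hp
  exact hp rfl

lemma good_C (a : ℝ) (z : ℂ) : Good (RatFunc.C a) z := by
  simp [Good, RatFunc.denom_C]

lemma good_one (z : ℂ) : Good (1 : TF) z := by
  simp [Good]

lemma good_zero (z : ℂ) : Good (0 : TF) z := by
  simp [Good]

lemma good_add {f g : TF} {z : ℂ} (hf : Good f z) (hg : Good g z) : Good (f + g) z :=
  good_of_dvd (RatFunc.denom_add_dvd f g)
    (by rw [Polynomial.map_mul, Polynomial.eval_mul]; exact mul_ne_zero hf hg)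

lemma good_mul {f g : TF} {z : ℂ} (hf : Good f z) (hg : Good g z) : Good (f * g) z :=
  good_of_dvd (RatFunc.denom_mul_dvd f g)
    (by rw [Polynomial.map_mul, Polynomial.eval_mul]; exact mul_ne_zero hf hg)

lemma good_neg {f : TF} {z : ℂ} (hf : Good f z) : Good (-f) z := by
  have : -f = RatFunc.C (-1) * f := by
    rw [map_neg, map_one, neg_mul, one_mul]
  rw [this]; exact good_mul (good_C _ _) hf

lemma good_sub {f g : TF} {z : ℂ} (hf : Good f z) (hg : Good g z) : Good (f - g) z := by
  rw [sub_eq_add_neg]; exact good_add hf (good_neg hg)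

lemma good_sum {ι : Type*} {s : Finset ι} {F : ι → TF} {z : ℂ}
    (h : ∀ i ∈ s, Good (F i) z) : Good (∑ i ∈ s, F i) z := by
  classical
  induction s using Finset.induction with
  | empty => simpa using good_zero z
  | insert _ _ hni ih =>
    rw [Finset.sum_insert hni]
    exact good_add (h _ (Finset.mem_insert_self _ _))
      (ih fun i hi => h i (Finset.mem_insert_of_mem hi))

lemma inv_eq_div (f : TF) (hf : f ≠ 0) :
    f⁻¹ = algebraMap _ _ f.denom / algebraMap _ _ f.num := by
  have h := RatFunc.num_div_denom f
  conv_lhs => rw [← h]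
  rw [inv_div]

lemma good_inv {f : TF} {z : ℂ} (hf : f ≠ 0) (hn : (f.num.map mc).eval z ≠ 0) :
    Good f⁻¹ z := by
  have hd : (f⁻¹).denom ∣ f.num := by
    rw [inv_eq_div f hf]; exact RatFunc.denom_div_dvd _ _
  exact good_of_dvd hd hn

lemma evalTF_add {f g : TF} {z : ℂ} (hf : Good f z) (hg : Good g z) :
    evalTF (f + g) z = evalTF f z + evalTF g z := by
  rw [evalTF_eq, evalTF_eq, evalTF_eq]
  exact RatFunc.eval_add (f := mc) (a := z) ((good_iff f z).1 hf) ((good_iff g z).1 hg)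

lemma evalTF_mul {f g : TF} {z : ℂ} (hf : Good f z) (hg : Good g z) :
    evalTF (f * g) z = evalTF f z * evalTF g z := by
  rw [evalTF_eq, evalTF_eq, evalTF_eq]
  exact RatFunc.eval_mul (f := mc) (a := z) ((good_iff f z).1 hf) ((good_iff g z).1 hg)

@[simp] lemma evalTF_C (a : ℝ) (z : ℂ) : evalTF (RatFunc.C a) z = (a : ℂ) := by
  rw [evalTF_eq]; simpa using RatFunc.eval_C mc z (c := a)

@[simp] lemma evalTF_one (z : ℂ) : evalTF (1 : TF) z = 1 := by
  simp [evalTF]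

@[simp] lemma evalTF_zero (z : ℂ) : evalTF (0 : TF) z = 0 := by
  simp [evalTF]

lemma evalTF_neg {f : TF} {z : ℂ} (hf : Good f z) : evalTF (-f) z = - evalTF f z := by
  have h : -f = RatFunc.C (-1) * f := by rw [map_neg, map_one, neg_mul, one_mul]
  rw [h, evalTF_mul (good_C _ _) hf, evalTF_C]; push_cast; ring

lemma evalTF_sub {f g : TF} {z : ℂ} (hf : Good f z) (hg : Good g z) :
    evalTF (f - g) z = evalTF f z - evalTF g z := by
  rw [sub_eq_add_neg, evalTF_add hf (good_neg hg), evalTF_neg hg, sub_eq_add_neg]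

lemma evalTF_sum {ι : Type*} {s : Finset ι} {F : ι → TF} {z : ℂ}
    (h : ∀ i ∈ s, Good (F i) z) :
    evalTF (∑ i ∈ s, F i) z = ∑ i ∈ s, evalTF (F i) z := by
  classical
  induction s using Finset.induction with
  | empty => simp
  | insert _ _ hni ih =>
    rw [Finset.sum_insert hni, Finset.sum_insert hni,
      evalTF_add (h _ (Finset.mem_insert_self _ _))
        (good_sum fun i hi => h i (Finset.mem_insert_of_mem hi)),
      ih fun i hi => h i (Finset.mem_insert_of_mem hi)]

lemma evalTF_ne_zero_iff {f : TF} {z : ℂ} (hf : Good f z) :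
    evalTF f z ≠ 0 ↔ (f.num.map mc).eval z ≠ 0 := by
  unfold evalTF
  constructor
  · intro h h0; exact h (by rw [h0, zero_div])
  · intro h; exact div_ne_zero h hf

lemma evalTF_inv {f : TF} {z : ℂ} (hf : f ≠ 0) (hd : Good f z)
    (hn : (f.num.map mc).eval z ≠ 0) :
    evalTF f⁻¹ z = (evalTF f z)⁻¹ := by
  have h1 : evalTF (f * f⁻¹) z = evalTF f z * evalTF f⁻¹ z :=
    evalTF_mul hd (good_inv hf hn)
  rw [mul_inv_cancel₀ hf, evalTF_one] at h1
  exact (inv_eq_of_mul_eq_one_right h1.symm).symm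

end
end S9
namespace S9
open SLS RatFunc

noncomputable section
set_option synthInstance.maxHeartbeats 1000000
set_option maxHeartbeats 1000000

local notation "mc" => algebraMap ℝ ℂ

/-- All entries Good. -/
def GoodM {m n : ℕ} (F : TMat m n) (z : ℂ) : Prop := ∀ i j, Good (F i j) z

lemma goodM_add {m n : ℕ} {F G : TMat m n} {z : ℂ} (hF : GoodM F z) (hG : GoodM G z) :
    GoodM (F + G) z := fun i j => by
  rw [Matrix.add_apply]; exact good_add (hF i j) (hG i j)

lemma goodM_mul {m n k : ℕ} {F : TMat m n} {G : TMat n k} {z : ℂ}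
    (hF : GoodM F z) (hG : GoodM G z) : GoodM (F * G) z := fun i j => by
  rw [Matrix.mul_apply]
  exact good_sum fun l _ => good_mul (hF i l) (hG l j)

lemma goodM_smul {m n : ℕ} {c : TF} {F : TMat m n} {z : ℂ} (hc : Good c z)
    (hF : GoodM F z) : GoodM (c • F) z := fun i j => by
  rw [Matrix.smul_apply, smul_eq_mul]; exact good_mul hc (hF i j)

lemma goodM_rmap {m n : ℕ} (A : Matrix (Fin m) (Fin n) ℝ) (z : ℂ) :
    GoodM (rmap A) z := fun i j => good_C _ _

lemma evalMat_apply {m n : ℕ} (F : TMat m n) (z : ℂ) (i : Fin m) (j : Fin n) :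
    evalMat F z i j = evalTF (F i j) z := rfl

lemma evalMat_add {m n : ℕ} {F G : TMat m n} {z : ℂ} (hF : GoodM F z) (hG : GoodM G z) :
    evalMat (F + G) z = evalMat F z + evalMat G z := by
  ext i j
  rw [Matrix.add_apply, evalMat_apply, evalMat_apply, evalMat_apply, Matrix.add_apply]
  exact evalTF_add (hF i j) (hG i j)

lemma evalMat_mul {m n k : ℕ} {F : TMat m n} {G : TMat n k} {z : ℂ}
    (hF : GoodM F z) (hG : GoodM G z) :
    evalMat (F * G) z = evalMat F z * evalMat G z := by
  ext i j
  rw [evalMat_apply, Matrix.mul_apply, Matrix.mul_apply,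
    evalTF_sum fun l _ => good_mul (hF i l) (hG l j)]
  exact Finset.sum_congr rfl fun l _ => evalTF_mul (hF i l) (hG l j)

lemma evalMat_smul {m n : ℕ} {c : TF} {F : TMat m n} {z : ℂ} (hc : Good c z)
    (hF : GoodM F z) :
    evalMat (c • F) z = evalTF c z • evalMat F z := by
  ext i j
  rw [evalMat_apply, Matrix.smul_apply, Matrix.smul_apply, smul_eq_mul, smul_eq_mul,
    evalMat_apply]
  exact evalTF_mul hc (hF i j)

lemma evalMat_rmap {m n : ℕ} (A : Matrix (Fin m) (Fin n) ℝ) (z : ℂ) :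
    evalMat (rmap A) z = A.map (fun a => (a : ℂ)) := by
  ext i j
  rw [evalMat_apply]
  show evalTF (RatFunc.C (A i j)) z = _
  rw [evalTF_C]; rfl

/-! ### specNorm lemmas -/

lemma specNorm_nonneg {m n : ℕ} (M : Matrix (Fin m) (Fin n) ℂ) : 0 ≤ specNorm M :=
  norm_nonneg _

lemma specNorm_add_le {m n : ℕ} (A B : Matrix (Fin m) (Fin n) ℂ) :
    specNorm (A + B) ≤ specNorm A + specNorm B := by
  unfold specNorm
  rw [map_add, map_add]
  exact norm_add_le _ _

lemma specNorm_smul {m n : ℕ} (a : ℂ) (M : Matrix (Fin m) (Fin n) ℂ) :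
    specNorm (a • M) = ‖a‖ * specNorm M := by
  unfold specNorm
  rw [_root_.map_smul, _root_.map_smul]
  exact norm_smul a (LinearMap.toContinuousLinearMap (Matrix.toEuclideanLin M))

lemma specNorm_mul_le {m n k : ℕ} (A : Matrix (Fin m) (Fin n) ℂ)
    (B : Matrix (Fin n) (Fin k) ℂ) :
    specNorm (A * B) ≤ specNorm A * specNorm B := by
  unfold specNorm
  apply ContinuousLinearMap.opNorm_le_bound _ (by positivity)
  intro x
  have hx : (LinearMap.toContinuousLinearMap (Matrix.toEuclideanLin (A * B))) x
      = (LinearMap.toContinuousLinearMap (Matrix.toEuclideanLin A))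
        ((LinearMap.toContinuousLinearMap (Matrix.toEuclideanLin B)) x) := by
    simp only [LinearMap.coe_toContinuousLinearMap', Matrix.toEuclideanLin_apply,
      Equiv.apply_symm_apply, Matrix.mulVec_mulVec]
  rw [hx, mul_assoc]
  calc ‖_‖ ≤ ‖(LinearMap.toContinuousLinearMap (Matrix.toEuclideanLin A))‖ *
      ‖(LinearMap.toContinuousLinearMap (Matrix.toEuclideanLin B)) x‖ :=
        ContinuousLinearMap.le_opNorm _ _
    _ ≤ _ := by
        apply mul_le_mul_of_nonneg_left (ContinuousLinearMap.le_opNorm _ _) (norm_nonneg _)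

lemma coord_le_norm {m : ℕ} (x : EuclideanSpace ℂ (Fin m)) (i : Fin m) :
    ‖x i‖ ≤ ‖x‖ := by
  rw [EuclideanSpace.norm_eq]
  have h : ‖x i‖ = Real.sqrt (‖x i‖ ^ 2) := by
    rw [Real.sqrt_sq (norm_nonneg _)]
  rw [h]
  apply Real.sqrt_le_sqrt
  exact Finset.single_le_sum (f := fun j => ‖x j‖ ^ 2)
    (fun j _ => by positivity) (Finset.mem_univ i)

lemma norm_entry_le_specNorm {m n : ℕ} (M : Matrix (Fin m) (Fin n) ℂ)
    (i : Fin m) (j : Fin n) : ‖M i j‖ ≤ specNorm M := by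
  set T := LinearMap.toContinuousLinearMap (Matrix.toEuclideanLin M) with hT
  set e : EuclideanSpace ℂ (Fin n) := EuclideanSpace.single j 1 with he
  have hne : ‖e‖ = 1 := by rw [he, EuclideanSpace.norm_single, norm_one]
  have h1 : (T e : EuclideanSpace ℂ (Fin m)) i = M i j := by
    rw [hT]
    simp only [LinearMap.coe_toContinuousLinearMap', Matrix.toEuclideanLin_apply]
    show (M *ᵥ ((WithLp.equiv 2 (Fin n → ℂ)) e)) i = M i j
    have : (WithLp.equiv 2 (Fin n → ℂ)) e = Pi.single j 1 := rfl
    simp [this, Matrix.mulVec_single]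
  calc ‖M i j‖ = ‖(T e : EuclideanSpace ℂ (Fin m)) i‖ := by rw [h1]
    _ ≤ ‖T e‖ := coord_le_norm _ _
    _ ≤ ‖T‖ * ‖e‖ := ContinuousLinearMap.le_opNorm _ _
    _ = specNorm M := by rw [hne, mul_one]; rfl

lemma specNorm_row_le {n : ℕ} (δ : Fin n → ℝ) :
    specNorm ((rowVec δ).map (fun a => (a : ℂ))) ≤ euclNorm δ := by
  have h0 : 0 ≤ euclNorm δ := Real.sqrt_nonneg _
  apply ContinuousLinearMap.opNorm_le_bound _ h0
  intro x
  set v : EuclideanSpace ℂ (Fin n) := WithLp.toLp 2 (fun j => (δ j : ℂ)) with hv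
  have hvn : ‖v‖ = euclNorm δ := by
    rw [EuclideanSpace.norm_eq, euclNorm]
    congr 1
    apply Finset.sum_congr rfl
    intro j _
    rw [hv]
    simp [Complex.norm_real, sq_abs]
  have hinner : ∀ i : Fin 1,
      ((((rowVec δ).map (fun a => (a : ℂ))) *ᵥ ((WithLp.equiv 2 (Fin n → ℂ)) x)) i)
        = inner ℂ v x := by
    intro i
    rw [PiLp.inner_apply]
    simp only [Matrix.mulVec, dotProduct, Matrix.map_apply, rowVec, Matrix.of_apply]
    apply Finset.sum_congr rfl
    intro j _
    simp [hv, Complex.conj_ofReal, mul_comm]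
  have key : ‖(LinearMap.toContinuousLinearMap
      (Matrix.toEuclideanLin ((rowVec δ).map (fun a => (a : ℂ))))) x‖ = ‖(inner ℂ v x : ℂ)‖ := by
    simp only [LinearMap.coe_toContinuousLinearMap', Matrix.toEuclideanLin_apply]
    rw [EuclideanSpace.norm_eq]
    rw [Fin.sum_univ_one]
    rw [Real.sqrt_sq_eq_abs, abs_norm]
    exact congrArg _ (hinner 0)
  rw [key, ← hvn]
  exact norm_inner_le_norm v x

end
end S9
namespace S9
open SLS RatFunc

noncomputable section
set_option synthInstance.maxHeartbeats 1000000
set_option maxHeartbeats 1000000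

local notation "mc" => algebraMap ℝ ℂ

/-! ### Strict properness and nonvanishing -/

lemma sp_intDegree {f : TF} (h : StrictlyProperTF f) (hf : f ≠ 0) : f.intDegree < 0 := by
  have hn : f.num ≠ 0 := RatFunc.num_ne_zero hf
  have := Polynomial.natDegree_lt_natDegree hn h
  unfold RatFunc.intDegree
  omega

lemma intDegree_sp {f : TF} (h : f.intDegree < 0) : StrictlyProperTF f := by
  unfold RatFunc.intDegree at h
  have hlt : f.num.natDegree < f.denom.natDegree := by omega
  by_cases hn : f.num = 0
  · unfold StrictlyProperTF
    rw [hn, Polynomial.degree_zero]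
    exact Ne.bot_lt fun hbot =>
      f.denom_ne_zero (Polynomial.degree_eq_bot.1 hbot)
  · exact Polynomial.degree_lt_degree hlt

lemma sp_zero : StrictlyProperTF (0 : TF) := by
  unfold StrictlyProperTF
  rw [RatFunc.num_zero, RatFunc.denom_zero, Polynomial.degree_zero, Polynomial.degree_one]
  exact Ne.bot_lt (by simp)

lemma sp_add {f g : TF} (hf : StrictlyProperTF f) (hg : StrictlyProperTF g) :
    StrictlyProperTF (f + g) := by
  by_cases h0f : f = 0
  · simpa [h0f] using hg
  by_cases h0g : g = 0
  · simpa [h0g] using hf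
  by_cases h0 : f + g = 0
  · rw [h0]; exact sp_zero
  apply intDegree_sp
  calc (f + g).intDegree ≤ max f.intDegree g.intDegree :=
        RatFunc.intDegree_add_le h0g h0
    _ < 0 := max_lt (sp_intDegree hf h0f) (sp_intDegree hg h0g)

lemma C_ne_zero {a : ℝ} (ha : a ≠ 0) : (RatFunc.C a : TF) ≠ 0 := by
  intro h
  apply ha
  have := congrArg RatFunc.num h
  rw [RatFunc.num_C, RatFunc.num_zero] at this
  exact Polynomial.C_eq_zero.1 this

lemma sp_C_mul {a : ℝ} {f : TF} (hf : StrictlyProperTF f) :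
    StrictlyProperTF (RatFunc.C a * f) := by
  by_cases ha : a = 0
  · simpa [ha] using sp_zero
  by_cases h0f : f = 0
  · simpa [h0f] using sp_zero
  apply intDegree_sp
  rw [RatFunc.intDegree_mul (C_ne_zero ha) h0f, RatFunc.intDegree_C]
  simpa using sp_intDegree hf h0f

lemma sp_sum {ι : Type*} {s : Finset ι} {F : ι → TF}
    (h : ∀ i ∈ s, StrictlyProperTF (F i)) : StrictlyProperTF (∑ i ∈ s, F i) := by
  classical
  induction s using Finset.induction with
  | empty => simpa using sp_zero
  | insert _ _ hni ih =>
    rw [Finset.sum_insert hni]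
    exact sp_add (h _ (Finset.mem_insert_self _ _))
      (ih fun i hi => h i (Finset.mem_insert_of_mem hi))

lemma sp_one_ne : ¬ StrictlyProperTF (1 : TF) := by
  unfold StrictlyProperTF
  rw [RatFunc.num_one, RatFunc.denom_one]
  exact lt_irrefl _

lemma sp_entry {n : ℕ} {N : TMat n 1} (hN : StrictlyProper N) (d : Fin n → ℝ) :
    StrictlyProperTF ((rmap (rowVec d) * N) 0 0) := by
  rw [Matrix.mul_apply]
  apply sp_sum
  intro k _
  have : rmap (rowVec d) 0 k = RatFunc.C (d k) := rfl
  rw [this]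
  exact sp_C_mul (hN k 0)

lemma one_sub_ne_zero {w : TF} (hw : StrictlyProperTF w) : (1 : TF) - w ≠ 0 := by
  intro h
  have : w = 1 := by
    have := sub_eq_zero.1 h
    exact this.symm
  rw [this] at hw
  exact sp_one_ne hw

lemma one_add_ne_zero {w : TF} (hw : StrictlyProperTF w) : (1 : TF) + w ≠ 0 := by
  have hw' : StrictlyProperTF (-w) := by
    have : -w = RatFunc.C (-1) * w := by rw [map_neg, map_one, neg_mul, one_mul]
    rw [this]; exact sp_C_mul hw
  have := one_sub_ne_zero hw'
  rwa [sub_neg_eq_add] at this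

/-- There is a point on the unit circle where both numerator and denominator
of a nonzero `f` are nonvanishing. -/
lemma exists_circle_point {f : TF} (hf : f ≠ 0) :
    ∃ z : ℂ, ‖z‖ = 1 ∧ (f.num.map mc).eval z ≠ 0 ∧ Good f z := by
  have hinf : (Metric.sphere (0 : ℂ) 1).Infinite := by
    apply IsPreconnected.infinite_of_nontrivial
    · exact isPreconnected_sphere (by rw [Complex.rank_real_complex]; norm_num) 0 1
    · refine ⟨1, by simp, -1, by simp, by norm_num⟩
  have hrn : ({z : ℂ | (f.num.map mc).IsRoot z}).Finite :=
    Polynomial.finite_setOf_isRoot (by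
      apply Polynomial.map_ne_zero_iff (by exact (algebraMap ℝ ℂ).injective) |>.2
      exact RatFunc.num_ne_zero hf)
  have hrd : ({z : ℂ | (f.denom.map mc).IsRoot z}).Finite :=
    Polynomial.finite_setOf_isRoot (by
      apply Polynomial.map_ne_zero_iff (by exact (algebraMap ℝ ℂ).injective) |>.2
      exact f.denom_ne_zero)
  have : ((Metric.sphere (0 : ℂ) 1) \
      ({z : ℂ | (f.num.map mc).IsRoot z} ∪ {z : ℂ | (f.denom.map mc).IsRoot z})).Nonempty :=
    Set.Infinite.nonempty (Set.Infinite.diff hinf (hrn.union hrd))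
  obtain ⟨z, hz, hnr⟩ := this
  rw [Set.mem_union, not_or] at hnr
  exact ⟨z, mem_sphere_zero_iff_norm.1 hz, hnr.1, hnr.2⟩

end
end S9
namespace S9
open SLS RatFunc

noncomputable section
set_option synthInstance.maxHeartbeats 1000000
set_option maxHeartbeats 1000000

local notation "mc" => algebraMap ℝ ℂ

lemma specNorm_continuous {m n : ℕ} :
    Continuous fun M : Matrix (Fin m) (Fin n) ℂ => specNorm M := by
  have h : Continuous fun M : Matrix (Fin m) (Fin n) ℂ =>
      (LinearMap.toContinuousLinearMap (Matrix.toEuclideanLin M)) := by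
    let L : Matrix (Fin m) (Fin n) ℂ →ₗ[ℂ]
        (EuclideanSpace ℂ (Fin n) →L[ℂ] EuclideanSpace ℂ (Fin m)) :=
      ((LinearMap.toContinuousLinearMap :
          (EuclideanSpace ℂ (Fin n) →ₗ[ℂ] EuclideanSpace ℂ (Fin m)) ≃ₗ[ℂ]
            (EuclideanSpace ℂ (Fin n) →L[ℂ] EuclideanSpace ℂ (Fin m))).toLinearMap).comp
        ((Matrix.toEuclideanLin :
          Matrix (Fin m) (Fin n) ℂ ≃ₗ[ℂ]
            (EuclideanSpace ℂ (Fin n) →ₗ[ℂ] EuclideanSpace ℂ (Fin m))).toLinearMap)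
    exact L.continuous_of_finiteDimensional
  exact continuous_norm.comp h

lemma continuousOn_evalTF (f : TF) (h : ∀ z : ℂ, ‖z‖ = 1 → Good f z) :
    ContinuousOn (fun z => evalTF f z) (Metric.sphere (0 : ℂ) 1) := by
  show ContinuousOn
    (fun z => (f.num.map mc).eval z / (f.denom.map mc).eval z) _
  apply ContinuousOn.div
  · exact (Polynomial.continuous _).continuousOn
  · exact (Polynomial.continuous _).continuousOn
  · intro z hz
    exact h z (mem_sphere_zero_iff_norm.1 hz)

lemma bddAbove_spec {m n : ℕ} (F : TMat m n) (hF : ∀ z : ℂ, ‖z‖ = 1 → GoodM F z) :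
    BddAbove {x : ℝ | ∃ z : ℂ, ‖z‖ = 1 ∧ x = specNorm (evalMat F z)} := by
  have himg : {x : ℝ | ∃ z : ℂ, ‖z‖ = 1 ∧ x = specNorm (evalMat F z)} =
      (fun z => specNorm (evalMat F z)) '' Metric.sphere (0 : ℂ) 1 := by
    ext x
    simp only [Set.mem_image, Set.mem_setOf_eq, mem_sphere_zero_iff_norm]
    constructor
    · rintro ⟨z, hz, rfl⟩; exact ⟨z, hz, rfl⟩
    · rintro ⟨z, hz, rfl⟩; exact ⟨z, hz, rfl⟩
  rw [himg]
  have hcont : ContinuousOn (fun z => specNorm (evalMat F z)) (Metric.sphere (0 : ℂ) 1) := by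
    apply specNorm_continuous.comp_continuousOn
    apply continuousOn_pi.2
    intro i
    apply continuousOn_pi.2
    intro j
    exact continuousOn_evalTF (F i j) (fun z hz => hF z hz i j)
  exact ((isCompact_sphere 0 1).image_of_continuousOn hcont).bddAbove

lemma le_hinfNorm {m n : ℕ} {F : TMat m n} (hF : ∀ z : ℂ, ‖z‖ = 1 → GoodM F z)
    {z : ℂ} (hz : ‖z‖ = 1) : specNorm (evalMat F z) ≤ hinfNorm F :=
  le_csSup (bddAbove_spec F hF) ⟨z, hz, rfl⟩

lemma hinfNorm_nonneg {m n : ℕ} {F : TMat m n} (hF : ∀ z : ℂ, ‖z‖ = 1 → GoodM F z) :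
    0 ≤ hinfNorm F :=
  (specNorm_nonneg _).trans (le_hinfNorm hF (z := 1) (by simp))

/-! ### The cost matrix and the key algebraic identity -/

/-- The transfer matrix whose H∞ norm is the cost. -/
def costMat {n nw : ℕ} (g : Fin n → ℝ) (B₁ : Matrix (Fin n) (Fin nw) ℝ)
    (D₂₁ : Matrix (Fin 1) (Fin nw) ℝ) (D₁₁ : Matrix (Fin 2) (Fin nw) ℝ)
    (Θ : Response n 1 1) : TMat 2 nw :=
  (rmap (C1mat g) * Θ.R + rmap D12mat * Θ.M) * rmap B₁ +
    (rmap (C1mat g) * Θ.N + rmap D12mat * Θ.L) * rmap D₂₁ + rmap D₁₁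

lemma cost_eq {n nw : ℕ} (g : Fin n → ℝ) (B₁ : Matrix (Fin n) (Fin nw) ℝ)
    (D₂₁ : Matrix (Fin 1) (Fin nw) ℝ) (D₁₁ : Matrix (Fin 2) (Fin nw) ℝ)
    (Θ : Response n 1 1) :
    cost g B₁ D₂₁ D₁₁ Θ = hinfNorm (costMat g B₁ D₂₁ D₁₁ Θ) := rfl

lemma sMulTF_eq {m n : ℕ} (c : TF) (M : TMat m n) : sMulTF c M = c • M := by
  ext i j
  rw [Matrix.smul_apply, smul_eq_mul]
  rfl

lemma V_eq {n : ℕ} (g : Fin n → ℝ) (Θ : Response n 1 1) :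
    rmap (C1mat g) * Θ.N + rmap D12mat * Θ.L =
      col2 ((rmap (rowVec g) * Θ.N) 0 0) (Θ.L 0 0) := by
  ext i j
  fin_cases i <;> fin_cases j <;>
    simp [Matrix.mul_apply, Matrix.add_apply, rmap, C1mat, D12mat, col2, rowVec,
      Fin.sum_univ_one]

lemma C1_split {n : ℕ} (g gt : Fin n → ℝ) :
    rmap (C1mat g) = rmap (C1mat gt) + rmap (C1mat (g - gt)) := by
  ext i j
  fin_cases i <;>
    simp [rmap, C1mat, Pi.sub_apply, map_sub, Matrix.add_apply]

lemma C1_factor {n : ℕ} (d : Fin n → ℝ) :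
    rmap (C1mat d) = col2 1 0 * rmap (rowVec d) := by
  ext i j
  fin_cases i <;>
    simp [Matrix.mul_apply, Fin.sum_univ_one, col2, rmap, C1mat, rowVec]

lemma row_split {n : ℕ} (g gt : Fin n → ℝ) (N : TMat n 1) :
    (rmap (rowVec g) * N) 0 0 =
      (rmap (rowVec gt) * N) 0 0 + (rmap (rowVec (g - gt)) * N) 0 0 := by
  rw [Matrix.mul_apply, Matrix.mul_apply, Matrix.mul_apply, ← Finset.sum_add_distrib]
  apply Finset.sum_congr rfl
  intro k _
  show RatFunc.C (g k) * N k 0 = RatFunc.C (gt k) * N k 0 + RatFunc.C (g k - gt k) * N k 0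
  rw [map_sub]
  ring

lemma col2_sub_smul (x y c : TF) :
    col2 (x - c) y = col2 x y - c • col2 1 0 := by
  ext i j
  fin_cases i <;> fin_cases j <;>
    simp [col2, Matrix.sub_apply, Matrix.smul_apply, smul_eq_mul]

/-- Distribution of the cost matrix over the Sherman–Morrison perturbation. -/
lemma costMat_perturb {n nw : ℕ} (g d : Fin n → ℝ) (B₁ : Matrix (Fin n) (Fin nw) ℝ)
    (D₂₁ : Matrix (Fin 1) (Fin nw) ℝ) (D₁₁ : Matrix (Fin 2) (Fin nw) ℝ)
    (Θ : Response n 1 1) :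
    costMat g B₁ D₂₁ D₁₁ (smPerturb d Θ) =
      costMat g B₁ D₂₁ D₁₁ Θ +
        (1 - (rmap (rowVec d) * Θ.N) 0 0)⁻¹ •
          ((rmap (C1mat g) * Θ.N + rmap D12mat * Θ.L) *
            (rmap (rowVec d) * (Θ.R * rmap B₁ + Θ.N * rmap D₂₁))) := by
  unfold costMat smPerturb
  simp only [sMulTF_eq, Matrix.add_mul, Matrix.mul_add, Matrix.smul_mul, Matrix.mul_smul,
    smul_add, Matrix.mul_assoc]
  abel

lemma hinfNorm_le {m n : ℕ} {F : TMat m n} {a : ℝ} (h0 : 0 ≤ a)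
    (h : ∀ z : ℂ, ‖z‖ = 1 → specNorm (evalMat F z) ≤ a) : hinfNorm F ≤ a := by
  apply Real.sSup_le _ h0
  rintro x ⟨z, hz, rfl⟩
  exact h z hz

lemma good_of_stable {f : TF} (h : StableTF f) {z : ℂ} (hz : ‖z‖ = 1) : Good f z := by
  intro h0
  exact absurd hz (ne_of_lt (h z h0))

/-- The key algebraic identity. -/
lemma key_identity {n nw : ℕ} (g gt : Fin n → ℝ) (B₁ : Matrix (Fin n) (Fin nw) ℝ)
    (D₂₁ : Matrix (Fin 1) (Fin nw) ℝ) (D₁₁ : Matrix (Fin 2) (Fin nw) ℝ)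
    (Θ : Response n 1 1)
    (hc : (1 : TF) - (rmap (rowVec (g - gt)) * Θ.N) 0 0 ≠ 0) :
    costMat g B₁ D₂₁ D₁₁ (smPerturb (g - gt) Θ) =
      costMat gt B₁ D₂₁ D₁₁ Θ +
        ((1 : TF) - (rmap (rowVec (g - gt)) * Θ.N) 0 0)⁻¹ •
          (col2 (1 + (rmap (rowVec gt) * Θ.N) 0 0) (Θ.L 0 0) *
            (rmap (rowVec (g - gt)) * (Θ.R * rmap B₁ + Θ.N * rmap D₂₁))) := by
  have h1 := costMat_perturb g (g - gt) B₁ D₂₁ D₁₁ Θ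
  have hb : costMat g B₁ D₂₁ D₁₁ Θ = costMat gt B₁ D₂₁ D₁₁ Θ +
      col2 1 0 * (rmap (rowVec (g - gt)) * (Θ.R * rmap B₁ + Θ.N * rmap D₂₁)) := by
    unfold costMat
    rw [C1_split g gt, C1_factor (g - gt)]
    simp only [Matrix.add_mul, Matrix.mul_add, Matrix.mul_assoc]
    abel
  have hkey : rmap (C1mat g) * Θ.N + rmap D12mat * Θ.L =
      col2 (1 + (rmap (rowVec gt) * Θ.N) 0 0) (Θ.L 0 0) -
        ((1 : TF) - (rmap (rowVec (g - gt)) * Θ.N) 0 0) • col2 1 0 := by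
    rw [V_eq g Θ]
    have h2 : (rmap (rowVec g) * Θ.N) 0 0 =
        (1 + (rmap (rowVec gt) * Θ.N) 0 0) -
          ((1 : TF) - (rmap (rowVec (g - gt)) * Θ.N) 0 0) := by
      rw [row_split g gt Θ.N]; ring
    rw [h2, col2_sub_smul]
  rw [h1, hb, hkey]
  rw [Matrix.sub_mul, smul_sub, Matrix.smul_mul]
  rw [smul_smul, inv_mul_cancel₀ hc, one_smul]
  abel

end
end S9

open S9 in
/-- if `Θ̃` satisfies the SLS constraints for `(Z, e₁, g̃ᵀ)`, `‖δ‖₂ ≤ ε`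
with `δ = g − g̃` and `ε > 0`, and `α > 0` satisfies `εα‖Ñ‖ + ‖[1 + g̃ᵀÑ; L̃]‖ ≤ α`,
then the perturbed response satisfies `J(g, Θ̂) ≤ J(g̃, Θ̃) + εα‖R̃B₁ + ÑD₂₁‖ = Q(g̃, Θ̃, α)`. -/
theorem statement_9 (r nw : ℕ) (g gt : Fin (r - 1) → ℝ)
    (B₁ : Matrix (Fin (r - 1)) (Fin nw) ℝ) (D₂₁ : Matrix (Fin 1) (Fin nw) ℝ)
    (D₁₁ : Matrix (Fin 2) (Fin nw) ℝ) (Θ : Response (r - 1) 1 1) (ε α : ℝ)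
    (hsls : SLSConstraints (shiftMat (r - 1)) (e1 (r - 1)) (rowVec gt) Θ)
    (hε : 0 < ε)
    (hδ : euclNorm (g - gt) ≤ ε)
    (hα : 0 < α)
    (hcon : ε * α * hinfNorm Θ.N + perfWeight gt Θ ≤ α) :
    cost g B₁ D₂₁ D₁₁ (smPerturb (g - gt) Θ) ≤ Qval gt B₁ D₂₁ D₁₁ ε Θ α := by
  classical
  obtain ⟨-, -, -, -, hRp, hMp, hNp, hRs, hMs, hNs, hLs⟩ := hsls
  -- circle-goodness of the response entries
  have gR : ∀ z : ℂ, ‖z‖ = 1 → GoodM Θ.R z := fun z hz i j => good_of_stable (hRs i j).2 hz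
  have gM : ∀ z : ℂ, ‖z‖ = 1 → GoodM Θ.M z := fun z hz i j => good_of_stable (hMs i j).2 hz
  have gN : ∀ z : ℂ, ‖z‖ = 1 → GoodM Θ.N z := fun z hz i j => good_of_stable (hNs i j).2 hz
  have gL : ∀ z : ℂ, ‖z‖ = 1 → GoodM Θ.L z := fun z hz i j => good_of_stable (hLs i j).2 hz
  -- nonvanishing rational functions
  have hc0 : (1 : TF) - (rmap (rowVec (g - gt)) * Θ.N) 0 0 ≠ 0 :=
    one_sub_ne_zero (sp_entry hNp (g - gt))
  have hvt0 : (1 : TF) + (rmap (rowVec gt) * Θ.N) 0 0 ≠ 0 :=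
    one_add_ne_zero (sp_entry hNp gt)
  -- goodness of composite matrices
  have gw : ∀ z : ℂ, ‖z‖ = 1 → Good ((rmap (rowVec (g - gt)) * Θ.N) 0 0) z :=
    fun z hz => goodM_mul (goodM_rmap _ _) (gN z hz) 0 0
  have gwt : ∀ z : ℂ, ‖z‖ = 1 → Good ((rmap (rowVec gt) * Θ.N) 0 0) z :=
    fun z hz => goodM_mul (goodM_rmap _ _) (gN z hz) 0 0
  have gc : ∀ z : ℂ, ‖z‖ = 1 → Good ((1 : TF) - (rmap (rowVec (g - gt)) * Θ.N) 0 0) z :=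
    fun z hz => good_sub (good_one z) (gw z hz)
  have gW : ∀ z : ℂ, ‖z‖ = 1 →
      GoodM (col2 (1 + (rmap (rowVec gt) * Θ.N) 0 0) (Θ.L 0 0)) z := by
    intro z hz i j
    fin_cases i <;> fin_cases j
    · exact good_add (good_one z) (gwt z hz)
    · exact gL z hz 0 0
  have gΦ : ∀ z : ℂ, ‖z‖ = 1 → GoodM (Θ.R * rmap B₁ + Θ.N * rmap D₂₁) z :=
    fun z hz => goodM_add (goodM_mul (gR z hz) (goodM_rmap _ _))
      (goodM_mul (gN z hz) (goodM_rmap _ _))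
  have gCt : ∀ z : ℂ, ‖z‖ = 1 → GoodM (costMat gt B₁ D₂₁ D₁₁ Θ) z := fun z hz =>
    goodM_add (goodM_add
      (goodM_mul (goodM_add (goodM_mul (goodM_rmap _ _) (gR z hz))
        (goodM_mul (goodM_rmap _ _) (gM z hz))) (goodM_rmap _ _))
      (goodM_mul (goodM_add (goodM_mul (goodM_rmap _ _) (gN z hz))
        (goodM_mul (goodM_rmap _ _) (gL z hz))) (goodM_rmap _ _)))
      (goodM_rmap _ _)
  -- numeric facts
  have hNn0 : 0 ≤ hinfNorm Θ.N := hinfNorm_nonneg gN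
  have hΦ0 : 0 ≤ hinfNorm (Θ.R * rmap B₁ + Θ.N * rmap D₂₁) := hinfNorm_nonneg gΦ
  have hCt0 : 0 ≤ hinfNorm (costMat gt B₁ D₂₁ D₁₁ Θ) := hinfNorm_nonneg gCt
  have hpW : perfWeight gt Θ =
      hinfNorm (col2 (1 + (rmap (rowVec gt) * Θ.N) 0 0) (Θ.L 0 0)) := rfl
  rw [hpW] at hcon
  have hpWpos : 0 < hinfNorm (col2 (1 + (rmap (rowVec gt) * Θ.N) 0 0) (Θ.L 0 0)) := by
    obtain ⟨z₀, hz₀, hnum, hgood⟩ := exists_circle_point hvt0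
    have hne : evalTF ((1 : TF) + (rmap (rowVec gt) * Θ.N) 0 0) z₀ ≠ 0 :=
      (evalTF_ne_zero_iff hgood).2 hnum
    calc (0 : ℝ) < ‖evalTF ((1 : TF) + (rmap (rowVec gt) * Θ.N) 0 0) z₀‖ :=
          norm_pos_iff.2 hne
      _ = ‖evalMat (col2 (1 + (rmap (rowVec gt) * Θ.N) 0 0) (Θ.L 0 0)) z₀ 0 0‖ := rfl
      _ ≤ specNorm (evalMat (col2 (1 + (rmap (rowVec gt) * Θ.N) 0 0) (Θ.L 0 0)) z₀) :=
          norm_entry_le_specNorm _ 0 0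
      _ ≤ _ := le_hinfNorm gW hz₀
  have hβ : 0 < 1 - ε * hinfNorm Θ.N := by nlinarith
  have hWα : hinfNorm (col2 (1 + (rmap (rowVec gt) * Θ.N) 0 0) (Θ.L 0 0)) ≤
      α * (1 - ε * hinfNorm Θ.N) := by nlinarith
  -- the main bound
  have hQ : Qval gt B₁ D₂₁ D₁₁ ε Θ α = hinfNorm (costMat gt B₁ D₂₁ D₁₁ Θ) +
      ε * α * hinfNorm (Θ.R * rmap B₁ + Θ.N * rmap D₂₁) := rfl
  have hQ0 : 0 ≤ Qval gt B₁ D₂₁ D₁₁ ε Θ α := by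
    rw [hQ]; positivity
  rw [cost_eq]
  apply hinfNorm_le hQ0
  intro z hz
  rw [key_identity g gt B₁ D₂₁ D₁₁ Θ hc0]
  -- pointwise norm estimates
  have hwz : ‖evalTF ((rmap (rowVec (g - gt)) * Θ.N) 0 0) z‖ ≤ ε * hinfNorm Θ.N := by
    calc ‖evalTF ((rmap (rowVec (g - gt)) * Θ.N) 0 0) z‖
        = ‖(evalMat (rmap (rowVec (g - gt)) * Θ.N) z) 0 0‖ := rfl
      _ ≤ specNorm (evalMat (rmap (rowVec (g - gt)) * Θ.N) z) := norm_entry_le_specNorm _ 0 0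
      _ = specNorm (evalMat (rmap (rowVec (g - gt))) z * evalMat Θ.N z) := by
          rw [evalMat_mul (goodM_rmap _ _) (gN z hz)]
      _ ≤ specNorm (evalMat (rmap (rowVec (g - gt))) z) * specNorm (evalMat Θ.N z) :=
          specNorm_mul_le _ _
      _ ≤ ε * hinfNorm Θ.N := by
          apply mul_le_mul
          · rw [evalMat_rmap]; exact (specNorm_row_le _).trans hδ
          · exact le_hinfNorm gN hz
          · exact specNorm_nonneg _
          · exact le_of_lt hε
  have hcz : evalTF ((1 : TF) - (rmap (rowVec (g - gt)) * Θ.N) 0 0) z =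
      1 - evalTF ((rmap (rowVec (g - gt)) * Θ.N) 0 0) z := by
    rw [evalTF_sub (good_one z) (gw z hz), evalTF_one]
  have hcnorm : 1 - ε * hinfNorm Θ.N ≤
      ‖evalTF ((1 : TF) - (rmap (rowVec (g - gt)) * Θ.N) 0 0) z‖ := by
    rw [hcz]
    calc 1 - ε * hinfNorm Θ.N
        ≤ 1 - ‖evalTF ((rmap (rowVec (g - gt)) * Θ.N) 0 0) z‖ := by linarith
      _ = ‖(1 : ℂ)‖ - ‖evalTF ((rmap (rowVec (g - gt)) * Θ.N) 0 0) z‖ := by simp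
      _ ≤ _ := norm_sub_norm_le _ _
  have hcne : evalTF ((1 : TF) - (rmap (rowVec (g - gt)) * Θ.N) 0 0) z ≠ 0 := by
    intro h
    rw [h, norm_zero] at hcnorm
    linarith
  have hcnum := (evalTF_ne_zero_iff (gc z hz)).1 hcne
  have hginv : Good ((1 : TF) - (rmap (rowVec (g - gt)) * Θ.N) 0 0)⁻¹ z :=
    good_inv hc0 hcnum
  have hinveval : evalTF ((1 : TF) - (rmap (rowVec (g - gt)) * Θ.N) 0 0)⁻¹ z =
      (evalTF ((1 : TF) - (rmap (rowVec (g - gt)) * Θ.N) 0 0) z)⁻¹ :=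
    evalTF_inv hc0 (gc z hz) hcnum
  have gdr : GoodM (rmap (rowVec (g - gt))) z := goodM_rmap _ _
  have gprod : GoodM (col2 (1 + (rmap (rowVec gt) * Θ.N) 0 0) (Θ.L 0 0) *
      (rmap (rowVec (g - gt)) * (Θ.R * rmap B₁ + Θ.N * rmap D₂₁))) z :=
    goodM_mul (gW z hz) (goodM_mul gdr (gΦ z hz))
  rw [evalMat_add (gCt z hz) (goodM_smul hginv gprod), evalMat_smul hginv gprod,
    evalMat_mul (gW z hz) (goodM_mul gdr (gΦ z hz)), evalMat_mul gdr (gΦ z hz)]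
  -- final chain
  have hb1 : specNorm (evalMat (costMat gt B₁ D₂₁ D₁₁ Θ) z) ≤
      hinfNorm (costMat gt B₁ D₂₁ D₁₁ Θ) := le_hinfNorm gCt hz
  have hb2 : specNorm (evalMat (col2 (1 + (rmap (rowVec gt) * Θ.N) 0 0) (Θ.L 0 0)) z) ≤
      hinfNorm (col2 (1 + (rmap (rowVec gt) * Θ.N) 0 0) (Θ.L 0 0)) := le_hinfNorm gW hz
  have hb3 : specNorm (evalMat (rmap (rowVec (g - gt))) z) ≤ ε := by
    rw [evalMat_rmap]; exact (specNorm_row_le _).trans hδ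
  have hb4 : specNorm (evalMat (Θ.R * rmap B₁ + Θ.N * rmap D₂₁) z) ≤
      hinfNorm (Θ.R * rmap B₁ + Θ.N * rmap D₂₁) := le_hinfNorm gΦ hz
  have hcinv : ‖evalTF ((1 : TF) - (rmap (rowVec (g - gt)) * Θ.N) 0 0)⁻¹ z‖ ≤
      (1 - ε * hinfNorm Θ.N)⁻¹ := by
    rw [hinveval, norm_inv]
    exact inv_anti₀ hβ hcnorm
  set A1 := evalMat (costMat gt B₁ D₂₁ D₁₁ Θ) z
  set A2 := evalMat (col2 (1 + (rmap (rowVec gt) * Θ.N) 0 0) (Θ.L 0 0)) z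
  set A3 := evalMat (rmap (rowVec (g - gt))) z
  set A4 := evalMat (Θ.R * rmap B₁ + Θ.N * rmap D₂₁) z
  set cc := evalTF ((1 : TF) - (rmap (rowVec (g - gt)) * Θ.N) 0 0)⁻¹ z
  have step1 : specNorm (A1 + cc • (A2 * (A3 * A4))) ≤
      specNorm A1 + ‖cc‖ * (specNorm A2 * (specNorm A3 * specNorm A4)) := by
    calc specNorm (A1 + cc • (A2 * (A3 * A4)))
        ≤ specNorm A1 + specNorm (cc • (A2 * (A3 * A4))) := specNorm_add_le _ _
      _ = specNorm A1 + ‖cc‖ * specNorm (A2 * (A3 * A4)) := by rw [specNorm_smul]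
      _ ≤ specNorm A1 + ‖cc‖ * (specNorm A2 * specNorm (A3 * A4)) := by
          have := specNorm_mul_le A2 (A3 * A4)
          have h0 : 0 ≤ ‖cc‖ := norm_nonneg _
          nlinarith
      _ ≤ specNorm A1 + ‖cc‖ * (specNorm A2 * (specNorm A3 * specNorm A4)) := by
          exact add_le_add_right (mul_le_mul_of_nonneg_left
            (mul_le_mul_of_nonneg_left (specNorm_mul_le A3 A4) (specNorm_nonneg _))
            (norm_nonneg _)) _
  refine step1.trans ?_
  rw [hQ]
  -- numeric closure
  have hccinv : ‖cc‖ ≤ (1 - ε * hinfNorm Θ.N)⁻¹ := hcinv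
  have hβinv : 0 < (1 - ε * hinfNorm Θ.N)⁻¹ := inv_pos.2 hβ
  have key : ‖cc‖ * (specNorm A2 * (specNorm A3 * specNorm A4)) ≤
      ε * α * hinfNorm (Θ.R * rmap B₁ + Θ.N * rmap D₂₁) := by
    have h2 : specNorm A2 ≤ α * (1 - ε * hinfNorm Θ.N) := hb2.trans hWα
    have h30 : 0 ≤ specNorm A3 := specNorm_nonneg _
    have h40 : 0 ≤ specNorm A4 := specNorm_nonneg _
    have h20 : 0 ≤ specNorm A2 := specNorm_nonneg _
    have hcc0 : 0 ≤ ‖cc‖ := norm_nonneg _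
    calc ‖cc‖ * (specNorm A2 * (specNorm A3 * specNorm A4))
        ≤ (1 - ε * hinfNorm Θ.N)⁻¹ * ((α * (1 - ε * hinfNorm Θ.N)) *
            (ε * hinfNorm (Θ.R * rmap B₁ + Θ.N * rmap D₂₁))) := by
          apply mul_le_mul hccinv _ (by positivity) (le_of_lt hβinv)
          apply mul_le_mul h2 _ (by positivity) (by positivity)
          exact mul_le_mul hb3 hb4 h40 (le_of_lt hε)
      _ = ε * α * hinfNorm (Θ.R * rmap B₁ + Θ.N * rmap D₂₁) := by
          field_simp
  linarith
end
end

section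
/- Suppose the coarse-grained identification error δ = g_{0:r−1} − g̃_{0:r−1} is formed from m experiments with noise variance σ², and suppose the inputs are chosen so that S := ((Z_matᵀZ_mat)⁻¹)_{[r]} satisfies Tr(S) ≤ 4·log 2 · r^{2/max(p,2)}/m for some p ∈ [1, ∞]. Then for every η ∈ (0, 1), with probability at least 1 − η, ‖δ‖₂ ≤ 2·√(log 2 · σ²·r^{2/max(p,2)}/m)·(1 + √(2·log(1/η))). -/
/- Preliminaries: transfer functions as real rational functions, RH∞, H∞ norms,
   System-Level Synthesis (SLS) constraints, controllers, closed-loop responses,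
   coarse-grained identification, Gaussian vectors. -/

noncomputable section
open scoped Matrix BigOperators ENNReal
open MeasureTheory ProbabilityTheory Polynomial

open SLS MeasureTheory

namespace CGI
open MeasureTheory ProbabilityTheory Real NNReal ENNReal

def GMB {α : Type*} [MeasurableSpace α] (μ : Measure α) (Y : α → ℝ) (v : ℝ) : Prop :=
  0 ≤ v ∧ Measurable Y ∧ ∀ β c : ℝ, 0 ≤ β → 2*β*v < 1 →
    ∫⁻ x, ENNReal.ofReal (Real.exp (β*(c + Y x)^2)) ∂μ ≤
      ENNReal.ofReal ((Real.sqrt (1 - 2*β*v))⁻¹ * Real.exp (β*c^2/(1-2*β*v)))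

lemma gauss1D (V : ℝ≥0) (β c : ℝ) (hβ : 0 ≤ β) (h : 2*β*V < 1) :
    ∫⁻ y, ENNReal.ofReal (Real.exp (β*(c+y)^2)) ∂(gaussianReal 0 V) ≤
      ENNReal.ofReal ((Real.sqrt (1-2*β*(V:ℝ)))⁻¹ * Real.exp (β*c^2/(1-2*β*(V:ℝ)))) := by
  by_cases hV : V = 0
  · subst hV
    rw [gaussianReal_zero_var, lintegral_dirac]
    simp only [NNReal.coe_zero, mul_zero, zero_mul, sub_zero, Real.sqrt_one, inv_one, div_one,
      one_mul, add_zero]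
    exact le_rfl
  · have hVpos : (0:ℝ) < V := lt_of_le_of_ne V.coe_nonneg (by exact_mod_cast (Ne.symm hV))
    have hD : (0:ℝ) < 1 - 2*β*(V:ℝ) := by linarith
    set A : ℝ := 1/(2*(V:ℝ)) - β with hAdef
    have hA : (0:ℝ) < A := by
      have : A = (1 - 2*β*(V:ℝ))/(2*(V:ℝ)) := by rw [hAdef]; field_simp
      rw [this]; positivity
    have h2VA : 2*(V:ℝ)*A = 1 - 2*β*(V:ℝ) := by rw [hAdef]; field_simp
    set d : ℝ := β*c/A with hd
    set E : ℝ := β*c^2/(1-2*β*(V:ℝ)) with hE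
    have h2V : 1/(2*(V:ℝ)) = A + β := by rw [hAdef]; ring
    have hVne : (V:ℝ) ≠ 0 := hVpos.ne'
    have hr : β*c^2 + β^2*c^2/A = (β*c^2*(1/(2*(V:ℝ))))/A := by
      rw [h2V]; field_simp
    have hEeq : E = β*c^2 + β^2*c^2/A := by
      rw [hE, ← h2VA, hr, mul_one_div, div_div]
    have hexp : ∀ y : ℝ, (-(y-0)^2/(2*(V:ℝ))) + β*(c+y)^2 = E + (-A*(y-d)^2) := by
      intro y
      have hy : -(y-0)^2/(2*(V:ℝ)) = -((y-0)^2*(A+β)) := by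
        rw [← h2V]; field_simp
      rw [hy, hEeq, hd]
      field_simp
      ring
    rw [gaussianReal_of_var_ne_zero 0 hV,
      lintegral_withDensity_eq_lintegral_mul _ (measurable_gaussianPDF 0 V)
        (by exact (measurable_const.add measurable_id').pow_const 2 |>.const_mul β |>.exp.ennreal_ofReal)]
    have hfun : ∀ y : ℝ, (gaussianPDF 0 V * fun y => ENNReal.ofReal (Real.exp (β*(c+y)^2))) y
        = ENNReal.ofReal (((Real.sqrt (2*Real.pi*(V:ℝ)))⁻¹ * Real.exp E) * Real.exp (-A*(y-d)^2)) := by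
      intro y
      simp only [Pi.mul_apply, gaussianPDF, gaussianPDFReal]
      rw [← ENNReal.ofReal_mul (by positivity)]
      congr 1
      calc ((Real.sqrt (2*Real.pi*(V:ℝ)))⁻¹ * Real.exp (-(y-0)^2/(2*(V:ℝ)))) * Real.exp (β*(c+y)^2)
          = (Real.sqrt (2*Real.pi*(V:ℝ)))⁻¹ * Real.exp ((-(y-0)^2/(2*(V:ℝ))) + β*(c+y)^2) := by
            rw [mul_assoc, ← Real.exp_add]
        _ = (Real.sqrt (2*Real.pi*(V:ℝ)))⁻¹ * (Real.exp E * Real.exp (-A*(y-d)^2)) := by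
            rw [hexp y, Real.exp_add]
        _ = ((Real.sqrt (2*Real.pi*(V:ℝ)))⁻¹ * Real.exp E) * Real.exp (-A*(y-d)^2) := by ring
    simp only [hfun]
    rw [← ofReal_integral_eq_lintegral_ofReal]
    · have hint : ∫ y : ℝ, ((Real.sqrt (2*Real.pi*(V:ℝ)))⁻¹ * Real.exp E) * Real.exp (-A*(y-d)^2)
          = ((Real.sqrt (2*Real.pi*(V:ℝ)))⁻¹ * Real.exp E) * Real.sqrt (Real.pi / A) := by
        rw [integral_const_mul]
        congr 1
        have := integral_sub_right_eq_self (μ := volume) (fun y => Real.exp (-A*y^2)) d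
        rw [this, integral_gaussian]
      rw [hint]
      apply le_of_eq
      congr 1
      have hsq : (Real.sqrt (2*Real.pi*(V:ℝ)))⁻¹ * Real.sqrt (Real.pi / A) = (Real.sqrt (1-2*β*(V:ℝ)))⁻¹ := by
        rw [← h2VA, ← Real.sqrt_inv, ← Real.sqrt_mul (by positivity), ← Real.sqrt_inv]
        congr 1
        field_simp
      calc (Real.sqrt (2*Real.pi*(V:ℝ)))⁻¹ * Real.exp E * Real.sqrt (Real.pi / A)
          = ((Real.sqrt (2*Real.pi*(V:ℝ)))⁻¹ * Real.sqrt (Real.pi / A)) * Real.exp E := by ring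
        _ = (Real.sqrt (1-2*β*(V:ℝ)))⁻¹ * Real.exp E := by rw [hsq]
    · exact (((integrable_exp_neg_mul_sq hA).comp_sub_right d).const_mul _)
    · exact Filter.Eventually.of_forall (fun y => by positivity)


lemma gmb_scale (V : ℝ≥0) (a : ℝ) : GMB (gaussianReal 0 V) (fun y => a * y) (a^2 * V) := by
  refine ⟨by positivity, measurable_id'.const_mul a, fun β c hβ h2 => ?_⟩
  have hmap := gaussianReal_map_const_mul (μ := 0) (v := V) a
  rw [mul_zero] at hmap
  have hmeas : Measurable fun z : ℝ => ENNReal.ofReal (Real.exp (β*(c+z)^2)) :=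
    (measurable_const.add measurable_id').pow_const 2 |>.const_mul β |>.exp.ennreal_ofReal
  have hstep : ∫⁻ x, ENNReal.ofReal (Real.exp (β*(c + a*x)^2)) ∂(gaussianReal 0 V)
      = ∫⁻ z, ENNReal.ofReal (Real.exp (β*(c+z)^2))
          ∂(Measure.map (fun x => a * x) (gaussianReal 0 V)) := by
    rw [lintegral_map hmeas (measurable_id'.const_mul a)]
  rw [hstep, hmap]
  have := gauss1D _ β c hβ (show 2*β*((NNReal.mk (a^2) (sq_nonneg a) * V : ℝ≥0) : ℝ) < 1 from by
    simp only [NNReal.coe_mul, NNReal.coe_mk]; exact h2)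
  simpa only [NNReal.coe_mul, NNReal.coe_mk] using this


lemma GMB.prod {α γ : Type*} [MeasurableSpace α] [MeasurableSpace γ]
    {μ : Measure α} {ν : Measure γ} [SFinite μ] [SFinite ν]
    {Y : α → ℝ} {Z : γ → ℝ} {v w : ℝ} (hY : GMB μ Y v) (hZ : GMB ν Z w) :
    GMB (μ.prod ν) (fun p => Y p.1 + Z p.2) (v + w) := by
  obtain ⟨hv0, hYm, hYb⟩ := hY
  obtain ⟨hw0, hZm, hZb⟩ := hZ
  have hm : Measurable fun p : α × γ => Y p.1 + Z p.2 :=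
    (hYm.comp measurable_fst).add (hZm.comp measurable_snd)
  refine ⟨by linarith, hm, fun β c hβ h1 => ?_⟩
  have hDw : (0:ℝ) < 1 - 2*β*w := by nlinarith
  have hD : (0:ℝ) < 1 - 2*β*(v+w) := by linarith
  set β' : ℝ := β/(1-2*β*w) with hβ'def
  have hβ' : 0 ≤ β' := by positivity
  have h2v' : 2*β'*v < 1 := by
    rw [hβ'def, show 2*(β/(1-2*β*w))*v = (2*β*v)/(1-2*β*w) from by ring, div_lt_one hDw]
    nlinarith
  have hD' : (0:ℝ) < 1 - 2*β'*v := by linarith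
  have hkey : (1 - 2*β*w) * (1 - 2*β'*v) = 1 - 2*β*(v+w) := by
    rw [hβ'def]; field_simp; ring
  have hmint : Measurable fun p : α × γ => ENNReal.ofReal (Real.exp (β*(c + (Y p.1 + Z p.2))^2)) :=
    ((measurable_const.add hm).pow_const 2 |>.const_mul β).exp.ennreal_ofReal
  rw [lintegral_prod _ hmint.aemeasurable]
  have step1 : ∀ x : α, ∫⁻ y, ENNReal.ofReal (Real.exp (β*(c + (Y x + Z y))^2)) ∂ν ≤
      ENNReal.ofReal ((Real.sqrt (1-2*β*w))⁻¹) * ENNReal.ofReal (Real.exp (β'*(c + Y x)^2)) := by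
    intro x
    have h0 : ∀ y, β*(c + (Y x + Z y))^2 = β*((c + Y x) + Z y)^2 := by intro y; ring_nf
    simp only [h0]
    refine le_trans (hZb β (c + Y x) hβ (by nlinarith)) ?_
    rw [← ENNReal.ofReal_mul (by positivity)]
    apply ENNReal.ofReal_le_ofReal
    apply le_of_eq
    congr 1
    rw [hβ'def, div_mul_eq_mul_div]
  calc ∫⁻ x, ∫⁻ y, ENNReal.ofReal (Real.exp (β*(c + (Y x + Z y))^2)) ∂ν ∂μ
      ≤ ∫⁻ x, ENNReal.ofReal ((Real.sqrt (1-2*β*w))⁻¹) * ENNReal.ofReal (Real.exp (β'*(c + Y x)^2)) ∂μ :=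
        lintegral_mono step1
    _ = ENNReal.ofReal ((Real.sqrt (1-2*β*w))⁻¹) * ∫⁻ x, ENNReal.ofReal (Real.exp (β'*(c + Y x)^2)) ∂μ := by
        rw [lintegral_const_mul _ (show Measurable fun x => ENNReal.ofReal (Real.exp (β'*(c + Y x)^2)) from ((measurable_const.add hYm).pow_const 2 |>.const_mul β').exp.ennreal_ofReal)]
    _ ≤ ENNReal.ofReal ((Real.sqrt (1-2*β*w))⁻¹) *
        ENNReal.ofReal ((Real.sqrt (1 - 2*β'*v))⁻¹ * Real.exp (β'*c^2/(1-2*β'*v))) := by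
        exact mul_le_mul_right (hYb β' c hβ' h2v') _
    _ = ENNReal.ofReal ((Real.sqrt (1 - 2*β*(v+w)))⁻¹ * Real.exp (β*c^2/(1-2*β*(v+w)))) := by
        rw [← ENNReal.ofReal_mul (by positivity)]
        congr 1
        rw [← mul_assoc, ← hkey]
        congr 1
        · rw [Real.sqrt_mul hDw.le, mul_inv]
        · congr 1
          rw [hβ'def]
          field_simp


lemma GMB.pi {n : ℕ} {α : Type} [MeasurableSpace α] (μ : Fin n → Measure α)
    (hP : ∀ i, IsProbabilityMeasure (μ i)) (Y : Fin n → α → ℝ) (v : Fin n → ℝ)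
    (h : ∀ i, GMB (μ i) (Y i) (v i)) :
    GMB (Measure.pi μ) (fun x => ∑ i, Y i (x i)) (∑ i, v i) := by
  induction n with
  | zero =>
    haveI := hP
    haveI : ∀ i, SigmaFinite (μ i) := fun i => inferInstance
    haveI : IsProbabilityMeasure (Measure.pi μ) := inferInstance
    refine ⟨le_of_eq (by simp), by simp [measurable_const], fun β c hβ h2 => ?_⟩
    simp only [Finset.univ_eq_empty, Finset.sum_empty, add_zero, mul_zero, sub_zero,
      Real.sqrt_one, inv_one, one_mul, div_one]
    rw [lintegral_const, measure_univ, mul_one]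
  | succ n ih =>
    haveI := hP
    haveI : ∀ i, SigmaFinite (μ i) := fun i => inferInstance
    have htail : GMB (Measure.pi fun j : Fin n => μ (Fin.succ j))
        (fun x => ∑ j : Fin n, Y (Fin.succ j) (x j)) (∑ j : Fin n, v (Fin.succ j)) :=
      ih (fun j => μ (Fin.succ j)) (fun j => hP _) (fun j => Y (Fin.succ j))
        (fun j => v (Fin.succ j)) (fun j => h (Fin.succ j))
    have hprod := (h 0).prod htail
    obtain ⟨hv0, hYm, hYb⟩ := hprod
    have mp := measurePreserving_piFinSuccAbove μ 0
    have hmeq : (Measure.pi fun j : Fin n => μ ((0 : Fin (n+1)).succAbove j))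
        = Measure.pi fun j : Fin n => μ (Fin.succ j) := by
      simp [Fin.zero_succAbove]
    rw [hmeq] at mp
    refine ⟨by rw [Fin.sum_univ_succ]; exact hv0, ?_, fun β c hβ h2 => ?_⟩
    · exact Finset.measurable_sum _ (fun i _ => ((h i).2.1).comp (measurable_pi_apply i))
    · have hkey : ∀ x : Fin (n+1) → α,
          (∑ i, Y i (x i)) = Y 0 ((MeasurableEquiv.piFinSuccAbove (fun _ => α) 0 x).1)
            + ∑ j : Fin n, Y (Fin.succ j) ((MeasurableEquiv.piFinSuccAbove (fun _ => α) 0 x).2 j) := by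
        intro x
        rw [Fin.sum_univ_succ]
        simp [MeasurableEquiv.piFinSuccAbove, Fin.zero_succAbove, Fin.tail]
      have hg : Measurable fun p : α × (Fin n → α) =>
          ENNReal.ofReal (Real.exp (β*(c + (Y 0 p.1 + ∑ j : Fin n, Y (Fin.succ j) (p.2 j)))^2)) :=
        ((measurable_const.add hYm).pow_const 2 |>.const_mul β).exp.ennreal_ofReal
      rw [show (∑ i : Fin (n+1), v i) = v 0 + ∑ j : Fin n, v (Fin.succ j) from Fin.sum_univ_succ v] at h2 ⊢
      calc ∫⁻ x, ENNReal.ofReal (Real.exp (β*(c + ∑ i, Y i (x i))^2)) ∂(Measure.pi μ)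
          = ∫⁻ p, ENNReal.ofReal (Real.exp (β*(c + (Y 0 p.1 + ∑ j : Fin n, Y (Fin.succ j) (p.2 j)))^2))
              ∂((μ 0).prod (Measure.pi fun j : Fin n => μ (Fin.succ j))) := by
            rw [← mp.lintegral_comp hg]
            congr 1
            funext x
            rw [hkey x]
        _ ≤ _ := hYb β c hβ h2


lemma prod_rpow_const {ι : Type*} (s : Finset ι) (a : ℝ≥0∞) (h0 : a ≠ 0) (ht : a ≠ ⊤)
    (w : ι → ℝ) : ∏ i ∈ s, a ^ w i = a ^ (∑ i ∈ s, w i) := by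
  induction s using Finset.cons_induction with
  | empty => simp
  | cons i s hi ih => rw [Finset.prod_cons, Finset.sum_cons, ih, ENNReal.rpow_add _ _ h0 ht]


lemma tail_bound {α : Type} [MeasurableSpace α] (μ : Measure α) [IsProbabilityMeasure μ]
    {r : ℕ} (Y : Fin r → α → ℝ) (ρ : Fin r → ℝ) (σ2 : ℝ) (hσ2 : 0 < σ2)
    (hY : ∀ i, GMB μ (Y i) (σ2 * ρ i))
    (hρ0 : ∀ i, 0 ≤ ρ i)
    (hYzero : ∀ i, ρ i = 0 → ∀ x, Y i x = 0)
    (S2 : ℝ) (hS2 : 0 < S2) (hv : σ2 * (∑ i, ρ i) ≤ S2)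
    (u0 : ℝ) (hu0 : 0 < u0) (hu1 : u0 < 1) (b : ℝ) (hb : 0 < b) :
    μ {x | b < Real.sqrt (∑ i, (Y i x)^2)} ≤
      ENNReal.ofReal ((Real.sqrt (1-u0))⁻¹ * Real.exp (-(u0/(2*S2))*b^2)) := by
  classical
  set lam0 : ℝ := u0/(2*S2) with hlam0def
  have hlam0 : 0 < lam0 := by positivity
  set Q : α → ℝ := fun x => ∑ i, (Y i x)^2 with hQdef
  have hQm : Measurable Q := Finset.measurable_sum _ fun i _ => ((hY i).2.1.pow_const 2)
  have hQ0 : ∀ x, 0 ≤ Q x := fun x => Finset.sum_nonneg fun i _ => sq_nonneg _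
  set t0 : ℝ := ∑ i, ρ i with ht0def
  have ht00 : 0 ≤ t0 := Finset.sum_nonneg fun i _ => hρ0 i
  have h1u : 0 < 1 - u0 := by linarith
  have hsq1 : 0 < Real.sqrt (1-u0) := Real.sqrt_pos.mpr h1u
  have hsqle : Real.sqrt (1-u0) ≤ 1 :=
    le_trans (Real.sqrt_le_sqrt (by linarith)) (le_of_eq Real.sqrt_one)
  have hconst1 : (1:ℝ) ≤ (Real.sqrt (1-u0))⁻¹ := by
    nlinarith [mul_inv_cancel₀ hsq1.ne', inv_nonneg.mpr hsq1.le]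
  -- MGF bound
  have hmgf : ∫⁻ x, ENNReal.ofReal (Real.exp (lam0 * Q x)) ∂μ ≤
      ENNReal.ofReal ((Real.sqrt (1-u0))⁻¹) := by
    by_cases ht0 : t0 = 0
    · have hrho : ∀ i : Fin r, ρ i = 0 := by
        intro i
        have := (Finset.sum_eq_zero_iff_of_nonneg (fun i _ => hρ0 i)).mp ht0
        exact this i (Finset.mem_univ i)
      have hQz : ∀ x, Q x = 0 := fun x =>
        Finset.sum_eq_zero fun i _ => by rw [hYzero i (hrho i) x]; ring
      simp only [hQz, mul_zero, Real.exp_zero, ENNReal.ofReal_one, lintegral_one, measure_univ]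
      exact le_trans (by norm_num) (ENNReal.ofReal_le_ofReal hconst1)
    · have ht0pos : 0 < t0 := lt_of_le_of_ne ht00 (Ne.symm ht0)
      set w : Fin r → ℝ := fun i => ρ i / t0 with hwdef
      set F : Finset (Fin r) := Finset.univ.filter fun i => ρ i ≠ 0 with hFdef
      have hwpos : ∀ i ∈ F, 0 < w i := by
        intro i hi
        have : ρ i ≠ 0 := (Finset.mem_filter.mp hi).2
        exact div_pos (lt_of_le_of_ne (hρ0 i) (Ne.symm this)) ht0pos
      have hwsum : ∑ i ∈ F, w i = 1 := by
        rw [hwdef]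
        simp only
        rw [← Finset.sum_div, hFdef, Finset.sum_filter_ne_zero, ← ht0def, div_self ht0]
      have hprodeq : ∀ x, ENNReal.ofReal (Real.exp (lam0 * Q x)) =
          ∏ i ∈ F, (ENNReal.ofReal (Real.exp ((lam0/w i) * (Y i x)^2))) ^ (w i) := by
        intro x
        have h1 : lam0 * Q x = ∑ i ∈ F, lam0 * (Y i x)^2 := by
          rw [hQdef]
          simp only
          rw [Finset.mul_sum]
          refine (Finset.sum_subset (Finset.subset_univ F) ?_).symm
          intro i _ hiF
          have : ρ i = 0 := by
            by_contra hne
            exact hiF (Finset.mem_filter.mpr ⟨Finset.mem_univ i, hne⟩)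
          rw [hYzero i this x]
          ring
        rw [h1, Real.exp_sum, ENNReal.ofReal_prod_of_nonneg (fun i _ => (Real.exp_pos _).le)]
        refine Finset.prod_congr rfl fun i hi => ?_
        rw [ENNReal.ofReal_rpow_of_pos (Real.exp_pos _), ← Real.exp_mul]
        congr 2
        field_simp [(hwpos i hi).ne']
      have hfm : ∀ i ∈ F, AEMeasurable (fun x => ENNReal.ofReal (Real.exp ((lam0/w i) * (Y i x)^2))) μ :=
        fun i _ => ((((hY i).2.1.pow_const 2).const_mul _).exp.ennreal_ofReal).aemeasurable
      have hper : ∀ i ∈ F, ∫⁻ x, ENNReal.ofReal (Real.exp ((lam0/w i) * (Y i x)^2)) ∂μ ≤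
          ENNReal.ofReal ((Real.sqrt (1-u0))⁻¹) := by
        intro i hi
        have hwi := hwpos i hi
        have hρi : ρ i ≠ 0 := (Finset.mem_filter.mp hi).2
        have hβ : 0 ≤ lam0/w i := by positivity
        have hval : 2*(lam0/w i)*(σ2*ρ i) = 2*lam0*(σ2*t0) := by
          rw [hwdef]
          field_simp
        have hle : 2*lam0*(σ2*t0) ≤ u0 := by
          rw [hlam0def]
          rw [show 2*(u0/(2*S2))*(σ2*t0) = u0*((σ2*t0)/S2) from by field_simp]
          nlinarith [(div_le_one hS2).mpr hv]
        have h2β : 2*(lam0/w i)*(σ2*ρ i) < 1 := by rw [hval]; linarith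
        have := (hY i).2.2 (lam0/w i) 0 hβ h2β
        simp only [zero_add, ne_eq, OfNat.ofNat_ne_zero, not_false_eq_true, zero_pow, mul_zero,
          zero_div, Real.exp_zero, mul_one] at this
        refine le_trans this (ENNReal.ofReal_le_ofReal ?_)
        apply inv_anti₀ hsq1
        apply Real.sqrt_le_sqrt
        rw [hval]
        linarith
      calc ∫⁻ x, ENNReal.ofReal (Real.exp (lam0 * Q x)) ∂μ
          = ∫⁻ x, ∏ i ∈ F, (ENNReal.ofReal (Real.exp ((lam0/w i) * (Y i x)^2))) ^ (w i) ∂μ := by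
            congr 1; funext x; exact hprodeq x
        _ ≤ ∏ i ∈ F, (∫⁻ x, ENNReal.ofReal (Real.exp ((lam0/w i) * (Y i x)^2)) ∂μ) ^ (w i) :=
            ENNReal.lintegral_prod_norm_pow_le F hfm hwsum (fun i hi => (hwpos i hi).le)
        _ ≤ ∏ i ∈ F, (ENNReal.ofReal ((Real.sqrt (1-u0))⁻¹)) ^ (w i) :=
            Finset.prod_le_prod' fun i hi => ENNReal.rpow_le_rpow (hper i hi) (hwpos i hi).le
        _ = (ENNReal.ofReal ((Real.sqrt (1-u0))⁻¹)) ^ (∑ i ∈ F, w i) :=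
            prod_rpow_const F _ (by rw [Ne, ENNReal.ofReal_eq_zero, not_le]; positivity)
              ENNReal.ofReal_ne_top w
        _ = ENNReal.ofReal ((Real.sqrt (1-u0))⁻¹) := by rw [hwsum, ENNReal.rpow_one]
  -- Markov
  set ε : ℝ≥0∞ := ENNReal.ofReal (Real.exp (lam0 * b^2)) with hεdef
  have hε0 : ε ≠ 0 := by simp [hεdef, Real.exp_pos]
  have hεt : ε ≠ ⊤ := ENNReal.ofReal_ne_top
  have hfmeas : AEMeasurable (fun x => ENNReal.ofReal (Real.exp (lam0 * Q x))) μ :=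
    ((hQm.const_mul lam0).exp.ennreal_ofReal).aemeasurable
  have hmarkov := mul_meas_ge_le_lintegral₀ hfmeas ε
  have hsub : {x | b < Real.sqrt (Q x)} ⊆ {x | ε ≤ ENNReal.ofReal (Real.exp (lam0 * Q x))} := by
    intro x hx
    simp only [Set.mem_setOf_eq] at hx ⊢
    have hb2 : b^2 ≤ Q x := by
      have hss := Real.sq_sqrt (hQ0 x)
      nlinarith [Real.sqrt_nonneg (Q x)]
    exact ENNReal.ofReal_le_ofReal (Real.exp_le_exp.mpr (by nlinarith))
  calc μ {x | b < Real.sqrt (Q x)}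
      ≤ μ {x | ε ≤ ENNReal.ofReal (Real.exp (lam0 * Q x))} := measure_mono hsub
    _ = ε⁻¹ * (ε * μ {x | ε ≤ ENNReal.ofReal (Real.exp (lam0 * Q x))}) := by
        rw [← mul_assoc, ENNReal.inv_mul_cancel hε0 hεt, one_mul]
    _ ≤ ε⁻¹ * ENNReal.ofReal ((Real.sqrt (1-u0))⁻¹) := by
        exact mul_le_mul_right (le_trans hmarkov hmgf) _
    _ = ENNReal.ofReal ((Real.sqrt (1-u0))⁻¹ * Real.exp (-lam0*b^2)) := by
        rw [hεdef, ← ENNReal.ofReal_inv_of_pos (Real.exp_pos _), ← Real.exp_neg,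
          ← ENNReal.ofReal_mul (Real.exp_pos _).le]
        rw [mul_comm]
        congr 2
        ring
    _ = ENNReal.ofReal ((Real.sqrt (1-u0))⁻¹ * Real.exp (-(u0/(2*S2))*b^2)) := by rw [hlam0def]


lemma gmb_iid (mE T : ℕ) (σ2 : ℝ) (a : Fin mE → Fin T → ℝ) :
    GMB (SLS.iidGaussianLaw mE T σ2)
      (fun x => ∑ k, ∑ t, a k t * x k t) (∑ k, ∑ t, (a k t)^2 * (σ2.toNNReal:ℝ)) := by
  have hinner : ∀ k : Fin mE, GMB (Measure.pi fun _ : Fin T => gaussianReal 0 σ2.toNNReal)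
      (fun xk : Fin T → ℝ => ∑ t, a k t * xk t) (∑ t, (a k t)^2 * (σ2.toNNReal:ℝ)) :=
    fun k => GMB.pi (fun _ => gaussianReal 0 σ2.toNNReal) (fun _ => inferInstance)
      (fun t y => a k t * y) (fun t => (a k t)^2 * (σ2.toNNReal:ℝ))
      (fun t => gmb_scale _ _)
  exact GMB.pi (fun _ : Fin mE => Measure.pi fun _ : Fin T => gaussianReal 0 σ2.toNNReal)
    (fun _ => inferInstance) (fun k xk => ∑ t, a k t * xk t)
    (fun k => ∑ t, (a k t)^2 * (σ2.toNNReal:ℝ)) hinner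

end CGI


set_option maxHeartbeats 1000000 in
/-- coarse-grained identification error bound: if the inputs are chosen
so that `S := ((Z_matᵀZ_mat)⁻¹)_{[r]}` satisfies `Tr(S) ≤ 4·log 2·r^{2/max(p,2)}/m`,
then with probability at least `1 − η` the least-squares error on the first `r`
coefficients satisfies `‖δ‖₂ ≤ 2√(log 2·σ²·r^{2/max(p,2)}/m)(1 + √(2 log(1/η)))`. -/
theorem statement_12 {Ω : Type} [MeasurableSpace Ω] (P : Measure Ω)
    [IsProbabilityMeasure P] (T mE r : ℕ) (hrT : r ≤ T)
    (g0 : Fin T → ℝ) (u : Fin mE → Fin T → ℝ)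
    (hinv : IsUnit (ZtZ u).det)
    (σ : ℝ) (hσ : 0 < σ)
    (p : ℝ≥0∞) (hp : 1 ≤ p)
    (hS : (((ZtZ u)⁻¹).submatrix (Fin.castLE hrT) (Fin.castLE hrT)).trace ≤
      4 * Real.log 2 * rExp p r / mE)
    (ξ : Ω → Fin mE → Fin T → ℝ)
    (hlaw : Measure.map ξ P = iidGaussianLaw mE T (σ ^ 2))
    (η : ℝ) (hη0 : 0 < η) (hη1 : η < 1) :
    ENNReal.ofReal (1 - η) ≤
      P {ω | euclNorm (fun i : Fin r => g0 (Fin.castLE hrT i) -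
          lsEst u (fun k => (toep (u k)).mulVec g0 + ξ ω k) (Fin.castLE hrT i)) ≤
        2 * Real.sqrt (Real.log 2 * σ ^ 2 * rExp p r / mE) *
          (1 + Real.sqrt (2 * Real.log (1 / η)))} := by
  classical
  have hb0 : (0:ℝ) ≤ 2 * Real.sqrt (Real.log 2 * σ ^ 2 * rExp p r / mE) *
      (1 + Real.sqrt (2 * Real.log (1 / η))) := by positivity
  set b : ℝ := 2 * Real.sqrt (Real.log 2 * σ ^ 2 * rExp p r / mE) *
      (1 + Real.sqrt (2 * Real.log (1 / η))) with hbdef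
  by_cases hr0 : r = 0
  · subst hr0
    have hall : ∀ ω : Ω, euclNorm (fun i : Fin 0 => g0 (Fin.castLE hrT i) -
        lsEst u (fun k => (toep (u k)).mulVec g0 + ξ ω k) (Fin.castLE hrT i)) ≤ b := by
      intro ω
      have : euclNorm (fun i : Fin 0 => g0 (Fin.castLE hrT i) -
          lsEst u (fun k => (toep (u k)).mulVec g0 + ξ ω k) (Fin.castLE hrT i)) = 0 := by
        simp [euclNorm]
      rw [this]; exact hb0
    refine le_trans (ENNReal.ofReal_le_one.mpr (by linarith)) ?_
    rw [← measure_univ (μ := P)]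
    exact measure_mono fun ω _ => hall ω
  -- nondegenerate case
  have hr1 : 0 < r := Nat.pos_of_ne_zero hr0
  have hT : 0 < T := lt_of_lt_of_le hr1 hrT
  have hmE : 0 < mE := by
    by_contra hmE0
    push_neg at hmE0
    obtain rfl : mE = 0 := Nat.le_zero.mp hmE0
    have hZ : ZtZ u = 0 := by
      ext i j
      rw [ZtZ, Matrix.mul_apply]
      exact Finset.sum_eq_zero fun x _ => x.1.elim0
    rw [hZ, @Matrix.det_zero _ _ _ _ _ ⟨⟨0, hT⟩⟩] at hinv
    simpa using hinv
  -- notation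
  set W : Matrix (Fin T) (Fin mE × Fin T) ℝ := (ZtZ u)⁻¹ * (Zmat u)ᵀ with hWdef
  set Y : Fin r → (Fin mE → Fin T → ℝ) → ℝ :=
    fun i x => ∑ k, ∑ t, W (Fin.castLE hrT i) (k,t) * x k t with hYdef
  set ρ : Fin r → ℝ := fun i => ∑ k, ∑ t, (W (Fin.castLE hrT i) (k,t))^2 with hρdef
  set μ0 : Measure (Fin mE → Fin T → ℝ) := iidGaussianLaw mE T (σ^2) with hμ0def
  haveI : IsProbabilityMeasure μ0 := by
    rw [hμ0def, iidGaussianLaw]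
    infer_instance
  have hVc : (((σ^2 : ℝ).toNNReal) : ℝ) = σ^2 := Real.coe_toNNReal _ (sq_nonneg σ)
  -- linear algebra facts
  have hWZ : W * Zmat u = 1 := by
    rw [hWdef, Matrix.mul_assoc]
    have hz : (Zmat u)ᵀ * Zmat u = ZtZ u := rfl
    rw [hz]
    exact Matrix.nonsing_inv_mul _ hinv
  have hWWt : W * Wᵀ = (ZtZ u)⁻¹ := by
    have hsymm : (ZtZ u)ᵀ = ZtZ u := by
      have hz : ZtZ u = (Zmat u)ᵀ * Zmat u := rfl
      rw [hz, Matrix.transpose_mul, Matrix.transpose_transpose]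
    have h1 : Wᵀ = Zmat u * (ZtZ u)⁻¹ := by
      rw [hWdef, Matrix.transpose_mul, Matrix.transpose_transpose,
        Matrix.transpose_nonsing_inv, hsymm]
    rw [h1, ← Matrix.mul_assoc, hWZ, Matrix.one_mul]
  have hdelta : ∀ (x : Fin mE → Fin T → ℝ) (j : Fin T),
      g0 j - lsEst u (fun k => (toep (u k)).mulVec g0 + x k) j
        = -((W.mulVec fun pr => x pr.1 pr.2) j) := by
    intro x j
    have hy : (fun pr : Fin mE × Fin T => ((toep (u pr.1)).mulVec g0 + x pr.1) pr.2)
        = (Zmat u).mulVec g0 + (fun pr => x pr.1 pr.2) := by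
      funext pr
      rfl
    have hls : lsEst u (fun k => (toep (u k)).mulVec g0 + x k)
        = W.mulVec ((Zmat u).mulVec g0 + (fun pr => x pr.1 pr.2)) := by
      rw [lsEst, ← hWdef, ← hy]
    rw [hls, Matrix.mulVec_add, Matrix.mulVec_mulVec, hWZ, Matrix.one_mulVec]
    simp
  have hQfun : ∀ x : Fin mE → Fin T → ℝ,
      euclNorm (fun i : Fin r => g0 (Fin.castLE hrT i) -
        lsEst u (fun k => (toep (u k)).mulVec g0 + x k) (Fin.castLE hrT i))
      = Real.sqrt (∑ i, (Y i x)^2) := by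
    intro x
    rw [euclNorm]
    congr 1
    refine Finset.sum_congr rfl fun i _ => ?_
    rw [hdelta x (Fin.castLE hrT i), neg_sq]
    congr 1
    rw [hYdef]
    simp only
    rw [Matrix.mulVec, dotProduct, Fintype.sum_prod_type]
  -- trace identity
  have hρtr : ∀ i : Fin r, ρ i = (ZtZ u)⁻¹ (Fin.castLE hrT i) (Fin.castLE hrT i) := by
    intro i
    rw [← hWWt, Matrix.mul_apply, hρdef]
    simp only
    rw [Fintype.sum_prod_type]
    refine Finset.sum_congr rfl fun k _ => Finset.sum_congr rfl fun t _ => ?_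
    rw [Matrix.transpose_apply, sq]
  have htrace : ∑ i, ρ i
      = (((ZtZ u)⁻¹).submatrix (Fin.castLE hrT) (Fin.castLE hrT)).trace := by
    rw [Matrix.trace]
    refine Finset.sum_congr rfl fun i _ => ?_
    rw [hρtr i]
    rfl
  -- per-coordinate MGF bounds
  have hYgmb : ∀ i, CGI.GMB μ0 (Y i) (σ^2 * ρ i) := by
    intro i
    have hvar : (∑ k, ∑ t, (W (Fin.castLE hrT i) (k,t))^2 * (((σ^2 : ℝ).toNNReal):ℝ))
        = σ^2 * ρ i := by
      rw [hρdef]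
      simp only
      rw [Finset.mul_sum]
      refine Finset.sum_congr rfl fun k _ => ?_
      rw [Finset.mul_sum]
      refine Finset.sum_congr rfl fun t _ => ?_
      rw [hVc]
      ring
    have := CGI.gmb_iid mE T (σ^2) (fun k t => W (Fin.castLE hrT i) (k,t))
    rw [hvar] at this
    exact this
  have hρ0 : ∀ i, 0 ≤ ρ i := fun i =>
    Finset.sum_nonneg fun k _ => Finset.sum_nonneg fun t _ => sq_nonneg _
  have hYzero : ∀ i, ρ i = 0 → ∀ x, Y i x = 0 := by
    intro i hzero x
    rw [hYdef]
    simp only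
    refine Finset.sum_eq_zero fun k _ => Finset.sum_eq_zero fun t _ => ?_
    have h1 : ∑ t, (W (Fin.castLE hrT i) (k,t))^2 = 0 :=
      (Finset.sum_eq_zero_iff_of_nonneg
        (fun k _ => Finset.sum_nonneg fun t _ => sq_nonneg _)).mp hzero k (Finset.mem_univ k)
    have h2 : (W (Fin.castLE hrT i) (k,t))^2 = 0 :=
      (Finset.sum_eq_zero_iff_of_nonneg (fun t _ => sq_nonneg _)).mp h1 t (Finset.mem_univ t)
    rw [pow_eq_zero_iff (two_ne_zero)] at h2
    rw [h2, zero_mul]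
  -- numeric setup
  set c0 : ℝ := Real.sqrt (2 * Real.log (1 / η)) with hc0def
  have hlog : 0 < Real.log (1/η) := Real.log_pos (one_lt_one_div hη0 hη1)
  have hc0 : 0 < c0 := Real.sqrt_pos.mpr (by positivity)
  set s0 : ℝ := Real.log 2 * σ ^ 2 * rExp p r / mE with hs0def
  have hrexp : 0 < rExp p r := by
    rw [rExp]
    exact Real.rpow_pos_of_pos (by exact_mod_cast hr1) _
  have hs0 : 0 < s0 := by
    rw [hs0def]
    have hl2 : 0 < Real.log 2 := Real.log_pos one_lt_two
    have : (0:ℝ) < mE := by exact_mod_cast hmE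
    positivity
  have hbpos : 0 < b := by
    rw [hbdef]
    exact mul_pos (mul_pos two_pos (Real.sqrt_pos.mpr hs0)) (by linarith)
  set u0 : ℝ := 1 - (1/(1+c0)^2) with hu0def
  have h1c : (1:ℝ) < (1+c0)^2 := by nlinarith
  have hu0 : 0 < u0 := by
    rw [hu0def]
    have : 1/(1+c0)^2 < 1 := by
      rw [div_lt_one (by positivity)]
      exact h1c
    linarith
  have hu1 : u0 < 1 := by
    rw [hu0def]
    have : 0 < 1/(1+c0)^2 := by positivity
    linarith
  set S2 : ℝ := 4 * s0 with hS2def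
  have hS2 : 0 < S2 := by rw [hS2def]; linarith
  have hv : σ^2 * (∑ i, ρ i) ≤ S2 := by
    rw [htrace]
    calc σ^2 * (((ZtZ u)⁻¹).submatrix (Fin.castLE hrT) (Fin.castLE hrT)).trace
        ≤ σ^2 * (4 * Real.log 2 * rExp p r / mE) :=
          mul_le_mul_of_nonneg_left hS (sq_nonneg σ)
      _ = S2 := by rw [hS2def, hs0def]; ring
  -- the tail bound
  have htail := CGI.tail_bound μ0 Y ρ (σ^2) (by positivity) hYgmb hρ0 hYzero
    S2 hS2 hv u0 hu0 hu1 b hbpos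
  -- numeric bound
  have hb2 : b^2 = 4 * s0 * (1+c0)^2 := by
    rw [hbdef, mul_pow, mul_pow, Real.sq_sqrt hs0.le]
    ring
  have hsqrtu : (Real.sqrt (1-u0))⁻¹ = 1 + c0 := by
    rw [hu0def]
    have h1 : (1:ℝ) - (1 - 1/(1+c0)^2) = 1/(1+c0)^2 := by ring
    rw [h1, one_div, Real.sqrt_inv, Real.sqrt_sq (by positivity), inv_inv]
  have hexp1 : -(u0/(2*S2))*b^2 = -(c0 + c0^2/2) := by
    rw [hb2, hS2def, hu0def]
    field_simp
    ring
  have hc0sq : c0^2 = 2 * Real.log (1/η) := by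
    rw [hc0def, Real.sq_sqrt (by positivity)]
  have hexpeta : Real.exp (-(c0^2/2)) = η := by
    rw [hc0sq]
    rw [show -(2 * Real.log (1/η) / 2) = Real.log η from by
      rw [one_div, Real.log_inv]; ring]
    exact Real.exp_log hη0
  have hnum : (Real.sqrt (1-u0))⁻¹ * Real.exp (-(u0/(2*S2))*b^2) ≤ η := by
    rw [hsqrtu, hexp1]
    have hsplit : Real.exp (-(c0 + c0^2/2)) = Real.exp (-c0) * Real.exp (-(c0^2/2)) := by
      rw [← Real.exp_add]; ring_nf
    rw [hsplit, hexpeta]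
    have h2 : 1 + c0 ≤ Real.exp c0 := by linarith [Real.add_one_le_exp c0]
    have h3 : Real.exp c0 * Real.exp (-c0) = 1 := by
      rw [← Real.exp_add]; simp
    have h1 : (1+c0) * Real.exp (-c0) ≤ 1 := by
      calc (1+c0) * Real.exp (-c0) ≤ Real.exp c0 * Real.exp (-c0) :=
            mul_le_mul_of_nonneg_right h2 (Real.exp_pos _).le
        _ = 1 := h3
    calc (1+c0) * (Real.exp (-c0) * η) = ((1+c0) * Real.exp (-c0)) * η := by ring
      _ ≤ 1 * η := mul_le_mul_of_nonneg_right h1 hη0.le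
      _ = η := one_mul η
  -- measurability and transfer to the law
  have hYm : ∀ i, Measurable (Y i) := by
    intro i
    rw [hYdef]
    refine Finset.measurable_sum _ fun k _ => Finset.measurable_sum _ fun t _ => ?_
    have h1 : Measurable fun x : Fin mE → Fin T → ℝ => x k t :=
      (measurable_pi_apply t).comp (measurable_pi_apply k)
    exact h1.const_mul _
  have hQm : Measurable fun x : Fin mE → Fin T → ℝ => ∑ i, (Y i x)^2 :=
    Finset.measurable_sum _ fun i _ => (hYm i).pow_const 2
  set E : Set (Fin mE → Fin T → ℝ) := {x | Real.sqrt (∑ i, (Y i x)^2) ≤ b} with hEdef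
  have hE : MeasurableSet E := measurableSet_le hQm.sqrt measurable_const
  have hξ : AEMeasurable ξ P := by
    by_contra hc
    rw [Measure.map_of_not_aemeasurable hc] at hlaw
    have h1 : μ0 Set.univ = 1 := measure_univ
    rw [← hlaw] at h1
    simp at h1
  have hset : {ω | euclNorm (fun i : Fin r => g0 (Fin.castLE hrT i) -
      lsEst u (fun k => (toep (u k)).mulVec g0 + ξ ω k) (Fin.castLE hrT i)) ≤ b}
      = ξ ⁻¹' E := by
    ext ω
    simp only [Set.mem_setOf_eq, Set.mem_preimage, hEdef]
    rw [hQfun (ξ ω)]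
  rw [hset, ← Measure.map_apply_of_aemeasurable hξ hE, hlaw]
  -- complement bound
  have hEc : Eᶜ = {x | b < Real.sqrt (∑ i, (Y i x)^2)} := by
    ext x
    simp [hEdef, not_le]
  have hcompl : μ0 Eᶜ ≤ ENNReal.ofReal η := by
    rw [hEc]
    exact le_trans htail (ENNReal.ofReal_le_ofReal hnum)
  have hsum : μ0 E + μ0 Eᶜ = 1 := by
    simpa using measure_add_measure_compl (μ := μ0) hE
  have h1 : (1:ℝ≥0∞) ≤ μ0 E + ENNReal.ofReal η := by
    rw [← hsum]
    exact add_le_add_right hcompl _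
  have h2 : ENNReal.ofReal (1-η) = 1 - ENNReal.ofReal η := by
    rw [ENNReal.ofReal_sub _ hη0.le, ENNReal.ofReal_one]
  rw [h2]
  exact tsub_le_iff_right.mpr h1
end
end

section
/- Let G be a stable, strictly proper FIR SISO plant with impulse-response vector g_{0:T−1} ∈ ℝ^T, and let Z_mat ∈ ℝ^{Tm×T} be the stacked input Toeplitz matrix of a coarse-grained identification experiment with Z_matᵀZ_mat invertible. Then for any σ_w, σ_ξ ≥ 0, the matrix Λ := (Z_matᵀZ_mat)⁻¹·Z_matᵀ·(σ_w²·Toep(g_{0:T−1})·Toep(g_{0:T−1})ᵀ + σ_ξ²·I)·Z_mat·(Z_matᵀZ_mat)⁻¹ satisfies Λ ⪯ (σ_w²·‖G‖² + σ_ξ²)·(Z_matᵀZ_mat)⁻¹ in the Loewner (positive semidefinite) order, where ‖G‖ is the H∞ norm of G; in particular the spectral norm of the Toeplitz matrix satisfies ‖Toep(g_{0:T−1})‖ ≤ ‖G‖. -/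
/- Preliminaries: transfer functions as real rational functions, RH∞, H∞ norms,
   System-Level Synthesis (SLS) constraints, controllers, closed-loop responses,
   coarse-grained identification, Gaussian vectors. -/

noncomputable section
open scoped Matrix BigOperators ENNReal
open MeasureTheory ProbabilityTheory Polynomial

open SLS MeasureTheory


section Aux
open Complex intervalIntegral Finset

lemma integral_circle_exp (n : ℤ) :
    ∫ θ : ℝ in (0:ℝ)..(2*Real.pi), Complex.exp ((n : ℂ) * θ * Complex.I) =
      if n = 0 then ((2*Real.pi : ℝ) : ℂ) else 0 := by
  rcases eq_or_ne n 0 with h | h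
  · simp [h]
  · rw [if_neg h]
    have hc : (n : ℂ) * Complex.I ≠ 0 :=
      mul_ne_zero (by exact_mod_cast h) Complex.I_ne_zero
    have harr : ∀ θ : ℝ, (n : ℂ) * θ * Complex.I = (n * Complex.I) * θ := by
      intro θ; ring
    simp_rw [harr]
    rw [integral_exp_mul_complex hc]
    have h1 : (n : ℂ) * Complex.I * (2*Real.pi : ℝ) = (n : ℂ) * (2 * Real.pi * Complex.I) := by
      push_cast; ring
    rw [h1, Complex.exp_int_mul_two_pi_mul_I]
    simp

lemma contE : Continuous (fun θ : ℝ => Complex.exp (θ * Complex.I)) :=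
  Complex.continuous_exp.comp (Complex.continuous_ofReal.mul continuous_const)

lemma hnormC : ∀ z : ℂ, ((‖z‖^2 : ℝ) : ℂ) = z * (starRingEnd ℂ) z := by
  intro z
  rw [Complex.mul_conj, Complex.normSq_eq_norm_sq]

lemma parseval_sum (N : ℕ) (c : ℕ → ℂ) :
    ∫ θ : ℝ in (0:ℝ)..(2*Real.pi),
        ‖∑ k ∈ Finset.range N, c k * Complex.exp (θ * Complex.I) ^ k‖ ^ 2
      = 2 * Real.pi * ∑ k ∈ Finset.range N, ‖c k‖ ^ 2 := by
  have hpt : ∀ θ : ℝ,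
      ((‖∑ k ∈ Finset.range N, c k * Complex.exp (θ * Complex.I) ^ k‖ ^ 2 : ℝ) : ℂ)
        = ∑ p ∈ Finset.range N ×ˢ Finset.range N,
            (c p.1 * (starRingEnd ℂ) (c p.2)) *
              Complex.exp ((((p.1:ℤ) - (p.2:ℤ) : ℤ) : ℂ) * θ * Complex.I) := by
    intro θ
    rw [hnormC, map_sum, Finset.sum_mul_sum, ← Finset.sum_product']
    refine Finset.sum_congr rfl fun p _ => ?_
    rw [map_mul, map_pow]
    have hconj : (starRingEnd ℂ) (Complex.exp (θ * Complex.I)) =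
        Complex.exp (-(θ * Complex.I)) := by
      rw [← Complex.exp_conj]; congr 1; simp
    rw [hconj]
    have h1 : Complex.exp (θ * Complex.I) ^ p.1 = Complex.exp ((p.1:ℂ) * (θ * Complex.I)) :=
      (Complex.exp_nat_mul _ p.1).symm
    have h2 : Complex.exp (-(θ * Complex.I)) ^ p.2 =
        Complex.exp ((p.2:ℂ) * -(θ * Complex.I)) := (Complex.exp_nat_mul _ p.2).symm
    calc c p.1 * Complex.exp (θ * Complex.I) ^ p.1 *
          ((starRingEnd ℂ) (c p.2) * Complex.exp (-(θ * Complex.I)) ^ p.2)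
        = c p.1 * (starRingEnd ℂ) (c p.2) *
            (Complex.exp ((p.1:ℂ) * (θ * Complex.I)) *
              Complex.exp ((p.2:ℂ) * -(θ * Complex.I))) := by
          rw [h1, h2]; ring
      _ = c p.1 * (starRingEnd ℂ) (c p.2) *
            Complex.exp ((((p.1:ℤ) - (p.2:ℤ) : ℤ) : ℂ) * θ * Complex.I) := by
          rw [← Complex.exp_add]; congr 1; push_cast; ring
  have hint : ∀ p : ℕ × ℕ, IntervalIntegrable
      (fun θ : ℝ => (c p.1 * (starRingEnd ℂ) (c p.2)) *
        Complex.exp ((((p.1:ℤ) - (p.2:ℤ) : ℤ) : ℂ) * θ * Complex.I))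
      MeasureTheory.volume 0 (2*Real.pi) :=
    fun p => (Continuous.intervalIntegrable (by fun_prop) _ _)
  have hC : (∫ θ : ℝ in (0:ℝ)..(2*Real.pi),
      ((‖∑ k ∈ Finset.range N, c k * Complex.exp (θ * Complex.I) ^ k‖ ^ 2 : ℝ) : ℂ))
      = ((2 * Real.pi * ∑ k ∈ Finset.range N, ‖c k‖ ^ 2 : ℝ) : ℂ) := by
    simp_rw [hpt]
    rw [intervalIntegral.integral_finset_sum (fun p _ => hint p)]
    have heach : ∀ p ∈ Finset.range N ×ˢ Finset.range N,
        (∫ θ : ℝ in (0:ℝ)..(2*Real.pi),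
          (c p.1 * (starRingEnd ℂ) (c p.2)) *
            Complex.exp ((((p.1:ℤ) - (p.2:ℤ) : ℤ) : ℂ) * θ * Complex.I))
        = (c p.1 * (starRingEnd ℂ) (c p.2)) *
            (if p.2 = p.1 then ((2*Real.pi : ℝ) : ℂ) else 0) := by
      intro p _
      rw [intervalIntegral.integral_const_mul, integral_circle_exp]
      congr 1
      have : ((p.1:ℤ) - (p.2:ℤ) = 0) ↔ (p.2 = p.1) := by omega
      simp [this]
    rw [Finset.sum_congr rfl heach, Finset.sum_product]
    have hrow : ∀ k ∈ Finset.range N,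
        (∑ l ∈ Finset.range N, (c k * (starRingEnd ℂ) (c l)) *
          (if l = k then ((2*Real.pi : ℝ) : ℂ) else 0))
        = ((‖c k‖^2 : ℝ) : ℂ) * ((2*Real.pi : ℝ) : ℂ) := by
      intro k hk
      simp only [mul_ite, mul_zero]
      rw [Finset.sum_ite_eq' (Finset.range N) k
        (fun l => c k * (starRingEnd ℂ) (c l) * ((2*Real.pi : ℝ) : ℂ)), if_pos hk, ← hnormC]
    rw [Finset.sum_congr rfl hrow]
    push_cast
    rw [Finset.mul_sum]
    refine Finset.sum_congr rfl fun k _ => by ring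
  have := intervalIntegral.integral_ofReal (f := fun θ : ℝ =>
      ‖∑ k ∈ Finset.range N, c k * Complex.exp (θ * Complex.I) ^ k‖ ^ 2)
      (a := 0) (b := 2*Real.pi) (μ := MeasureTheory.volume)
  rw [this] at hC
  exact_mod_cast hC
lemma evalTF_eq_of_mul (f : TF) (p q : Polynomial ℝ) (z : ℂ)
    (hq : (q.map (algebraMap ℝ ℂ)).eval z ≠ 0)
    (h : f * algebraMap (Polynomial ℝ) TF q = algebraMap (Polynomial ℝ) TF p) :
    evalTF f z = (p.map (algebraMap ℝ ℂ)).eval z / (q.map (algebraMap ℝ ℂ)).eval z := by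
  have hq0 : q ≠ 0 := by
    rintro rfl; simp at hq
  have hqa : algebraMap (Polynomial ℝ) TF q ≠ 0 := RatFunc.algebraMap_ne_zero hq0
  have hf : f = algebraMap (Polynomial ℝ) TF p / algebraMap (Polynomial ℝ) TF q := by
    rw [eq_div_iff hqa]; exact h
  have hdvd : f.denom ∣ q := (RatFunc.denom_dvd hq0).mpr ⟨p, hf⟩
  have hde : (f.denom.map (algebraMap ℝ ℂ)).eval z ≠ 0 := by
    obtain ⟨r, hr⟩ := hdvd
    intro h0
    apply hq
    rw [hr, Polynomial.map_mul, Polynomial.eval_mul, h0, zero_mul]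
  -- cross multiplication identity in ℝ[X]
  have hda : algebraMap (Polynomial ℝ) TF f.denom ≠ 0 :=
    RatFunc.algebraMap_ne_zero (RatFunc.denom_ne_zero f)
  have hcross : f.num * q = p * f.denom := by
    apply RatFunc.algebraMap_injective (K := ℝ)
    rw [map_mul, map_mul]
    have h1 : algebraMap (Polynomial ℝ) TF f.num =
        f * algebraMap (Polynomial ℝ) TF f.denom := by
      rw [← div_eq_iff hda]
      exact RatFunc.num_div_denom f
    rw [h1, mul_right_comm, h]
  have hcross' : (f.num.map (algebraMap ℝ ℂ)).eval z * (q.map (algebraMap ℝ ℂ)).eval z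
      = (p.map (algebraMap ℝ ℂ)).eval z * (f.denom.map (algebraMap ℝ ℂ)).eval z := by
    have := congrArg (fun r : Polynomial ℝ => (r.map (algebraMap ℝ ℂ)).eval z) hcross
    simpa [Polynomial.map_mul] using this
  rw [evalTF, div_eq_div_iff hde hq]
  linear_combination hcross'

lemma evalTF_firTF0 {T : ℕ} (g : Fin T → ℝ) (z : ℂ) (hz : z ≠ 0) :
    evalTF (firTF0 g) z = ∑ k : Fin T, (g k : ℂ) * (z⁻¹) ^ (k : ℕ) := by
  set P : Polynomial ℝ := ∑ k : Fin T, Polynomial.C (g k) * Polynomial.X ^ (T - 1 - (k : ℕ))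
    with hP
  have hmul : firTF0 g * algebraMap (Polynomial ℝ) TF (Polynomial.X ^ (T - 1))
      = algebraMap (Polynomial ℝ) TF P := by
    rw [firTF0, Finset.sum_mul, hP, map_sum]
    refine Finset.sum_congr rfl fun k _ => ?_
    rw [map_mul, map_pow, RatFunc.algebraMap_C, RatFunc.algebraMap_X, map_pow,
      RatFunc.algebraMap_X]
    have hk : (k : ℕ) + (T - 1 - (k : ℕ)) = T - 1 := by omega
    rw [mul_assoc]
    congr 1
    have hkk : (k : ℕ) ≤ T - 1 := by omega
    rw [pow_sub₀ _ RatFunc.X_ne_zero hkk, ← inv_pow]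
    ring
  have hzp : ((Polynomial.X ^ (T-1) : Polynomial ℝ).map (algebraMap ℝ ℂ)).eval z ≠ 0 := by
    simp [hz]
  rw [evalTF_eq_of_mul _ P _ z hzp hmul]
  have hPe : ((P.map (algebraMap ℝ ℂ)).eval z) = ∑ k : Fin T, (g k : ℂ) * z ^ (T - 1 - (k:ℕ)) := by
    rw [hP]
    simp [Polynomial.map_sum, Polynomial.eval_finset_sum]
  rw [hPe]
  have hqe : ((Polynomial.X ^ (T-1) : Polynomial ℝ).map (algebraMap ℝ ℂ)).eval z = z ^ (T-1) := by
    simp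
  rw [hqe]
  rw [Finset.sum_div]
  refine Finset.sum_congr rfl fun k _ => ?_
  have hkk : (k : ℕ) ≤ T - 1 := by omega
  have hdiv : z ^ (T - 1 - (k:ℕ)) / z ^ (T - 1) = z⁻¹ ^ (k:ℕ) := by
    rw [div_eq_iff (pow_ne_zero _ hz), inv_pow, pow_sub₀ _ hz hkk]
    ring
  rw [mul_div_assoc, hdiv]
open Matrix

lemma hinf_bddAbove {T : ℕ} (g : Fin T → ℝ) :
    BddAbove {x : ℝ | ∃ z : ℂ, ‖z‖ = 1 ∧ x = ‖evalTF (firTF0 g) z‖} := by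
  refine ⟨∑ k : Fin T, |g k|, ?_⟩
  rintro x ⟨z, hz, rfl⟩
  have hz0 : z ≠ 0 := by
    intro h; rw [h] at hz; simp at hz
  rw [evalTF_firTF0 g z hz0]
  refine le_trans (norm_sum_le _ _) ?_
  refine Finset.sum_le_sum fun k _ => ?_
  rw [norm_mul, norm_pow, norm_inv, hz]
  simp [Complex.norm_real, Real.norm_eq_abs]

lemma norm_evalTF_le {T : ℕ} (g : Fin T → ℝ) (z : ℂ) (hz : ‖z‖ = 1) :
    ‖evalTF (firTF0 g) z‖ ≤ hinfNormTF (firTF0 g) :=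
  le_csSup (hinf_bddAbove g) ⟨z, hz, rfl⟩

lemma hinf_nonneg {T : ℕ} (g : Fin T → ℝ) : 0 ≤ hinfNormTF (firTF0 g) :=
  le_trans (norm_nonneg _) (norm_evalTF_le g 1 (by simp))

lemma key_toep {T : ℕ} (g x : Fin T → ℝ) :
    ∑ i, ((toep g) *ᵥ x) i ^ 2 ≤ hinfNormTF (firTF0 g) ^ 2 * ∑ j, x j ^ 2 := by
  set c := hinfNormTF (firTF0 g) with hcdef
  rcases Nat.eq_zero_or_pos T with hT | hT
  · subst hT; simp
  set a : ℕ → ℂ := fun n => if h : n < T then ((g ⟨n, h⟩ : ℝ) : ℂ) else 0 with ha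
  set b : ℕ → ℂ := fun n => if h : n < T then ((x ⟨n, h⟩ : ℝ) : ℂ) else 0 with hb
  set pg : Polynomial ℂ := ∑ k ∈ Finset.range T, Polynomial.C (a k) * Polynomial.X ^ k with hpg
  set px : Polynomial ℂ := ∑ k ∈ Finset.range T, Polynomial.C (b k) * Polynomial.X ^ k with hpx
  set q : Polynomial ℂ := px * pg with hq
  have hcoeff : ∀ (cf : ℕ → ℂ) (n : ℕ),
      (∑ k ∈ Finset.range T, Polynomial.C (cf k) * Polynomial.X ^ k).coeff n
        = if n < T then cf n else 0 := by
    intro cf n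
    rw [Polynomial.finset_sum_coeff]
    simp only [Polynomial.coeff_C_mul, Polynomial.coeff_X_pow, mul_ite, mul_one, mul_zero]
    rw [Finset.sum_ite_eq (Finset.range T) n cf]
    simp [Finset.mem_range]
  have hdegg : pg.natDegree ≤ T - 1 :=
    Polynomial.natDegree_le_iff_coeff_eq_zero.mpr fun N hN => by
      rw [hpg, hcoeff, if_neg (by omega)]
  have hdegx : px.natDegree ≤ T - 1 :=
    Polynomial.natDegree_le_iff_coeff_eq_zero.mpr fun N hN => by
      rw [hpx, hcoeff, if_neg (by omega)]
  have hdegq : q.natDegree < 2 * T :=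
    lt_of_le_of_lt (le_trans Polynomial.natDegree_mul_le (add_le_add hdegx hdegg)) (by omega)
  have hevalg : ∀ w : ℂ, pg.eval w = ∑ k ∈ Finset.range T, a k * w ^ k := by
    intro w; rw [hpg, Polynomial.eval_finset_sum]; simp
  have hevalx : ∀ w : ℂ, px.eval w = ∑ k ∈ Finset.range T, b k * w ^ k := by
    intro w; rw [hpx, Polynomial.eval_finset_sum]; simp
  -- coefficients of q match the Toeplitz action
  have hqco : ∀ i : Fin T, q.coeff (i : ℕ) = ((((toep g) *ᵥ x) i : ℝ) : ℂ) := by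
    intro i
    have hi : (i : ℕ) < T := i.isLt
    rw [hq, Polynomial.coeff_mul, Finset.Nat.sum_antidiagonal_eq_sum_range_succ_mk]
    have hterm : ∀ j ∈ Finset.range ((i:ℕ)+1),
        px.coeff j * pg.coeff ((i:ℕ) - j) = a ((i:ℕ) - j) * b j := by
      intro j hj
      rw [Finset.mem_range] at hj
      rw [hpx, hpg, hcoeff, hcoeff, if_pos (by omega), if_pos (by omega), mul_comm]
    rw [Finset.sum_congr rfl hterm]
    have hmv : (((((toep g) *ᵥ x) i : ℝ)) : ℂ)
        = ∑ j ∈ Finset.range T, (if j ≤ (i:ℕ) then a ((i:ℕ) - j) * b j else 0) := by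
      rw [Matrix.mulVec, dotProduct]
      push_cast
      rw [← Fin.sum_univ_eq_sum_range (fun j => if j ≤ (i:ℕ) then a ((i:ℕ) - j) * b j else 0) T]
      refine Finset.sum_congr rfl fun j _ => ?_
      by_cases hji : (j : ℕ) ≤ (i : ℕ)
      · rw [if_pos hji]
        have h1 : (i:ℕ) - (j:ℕ) < T := by omega
        rw [toep]
        simp only [Matrix.of_apply, if_pos hji]
        simp [ha, hb, h1, Fin.is_lt]
      · rw [if_neg hji, toep]
        simp only [Matrix.of_apply, if_neg hji]
        simp
    rw [hmv]
    rw [← Finset.sum_subset (Finset.range_subset_range.mpr (by omega : (i:ℕ)+1 ≤ T))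
      (fun j _ hj => by rw [if_neg (by simp at hj ⊢; omega)])]
    refine Finset.sum_congr rfl fun j hj => ?_
    rw [Finset.mem_range] at hj
    rw [if_pos (by omega)]
  -- pointwise bound for pg on the circle
  have hbd : ∀ θ : ℝ, ‖pg.eval (Complex.exp (θ * Complex.I))‖ ≤ c := by
    intro θ
    set E : ℂ := Complex.exp (θ * Complex.I) with hE
    have hE0 : E ≠ 0 := Complex.exp_ne_zero _
    have hEn : ‖E‖ = 1 := Complex.norm_exp_ofReal_mul_I θ
    have hz1 : ‖E⁻¹‖ = 1 := by rw [norm_inv, hEn]; norm_num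
    have heq : pg.eval E = evalTF (firTF0 g) E⁻¹ := by
      rw [evalTF_firTF0 g _ (inv_ne_zero hE0), inv_inv, hevalg]
      rw [← Fin.sum_univ_eq_sum_range (fun k => a k * E ^ k) T]
      refine Finset.sum_congr rfl fun k _ => ?_
      simp [ha, Fin.is_lt]
    rw [heq]
    exact norm_evalTF_le g _ hz1
  have hcont : ∀ p : Polynomial ℂ,
      Continuous fun θ : ℝ => p.eval (Complex.exp (θ * Complex.I)) :=
    fun p => (Polynomial.continuous p).comp contE
  have hint1 : IntervalIntegrable
      (fun θ : ℝ => ‖px.eval (Complex.exp (θ * Complex.I)) *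
        pg.eval (Complex.exp (θ * Complex.I))‖ ^ 2) MeasureTheory.volume 0 (2*Real.pi) :=
    (((hcont px).mul (hcont pg)).norm.pow 2).intervalIntegrable _ _
  have hint2 : IntervalIntegrable
      (fun θ : ℝ => c^2 * ‖px.eval (Complex.exp (θ * Complex.I))‖ ^ 2)
      MeasureTheory.volume 0 (2*Real.pi) :=
    (continuous_const.mul ((hcont px).norm.pow 2)).intervalIntegrable _ _
  -- Parseval for q
  have hpar_q := parseval_sum (2*T) q.coeff
  have hqe : ∀ θ : ℝ, ∑ k ∈ Finset.range (2*T), q.coeff k * Complex.exp (θ * Complex.I) ^ k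
      = px.eval (Complex.exp (θ * Complex.I)) * pg.eval (Complex.exp (θ * Complex.I)) := by
    intro θ
    rw [← Polynomial.eval_eq_sum_range' hdegq, hq, Polynomial.eval_mul]
  simp_rw [hqe] at hpar_q
  have hpar_x := parseval_sum T b
  have hxe : ∀ θ : ℝ, ∑ k ∈ Finset.range T, b k * Complex.exp (θ * Complex.I) ^ k
      = px.eval (Complex.exp (θ * Complex.I)) := fun θ => (hevalx _).symm
  simp_rw [hxe] at hpar_x
  -- assemble
  have hmono : (∫ θ : ℝ in (0:ℝ)..(2*Real.pi),
      ‖px.eval (Complex.exp (θ * Complex.I)) * pg.eval (Complex.exp (θ * Complex.I))‖ ^ 2)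
      ≤ ∫ θ : ℝ in (0:ℝ)..(2*Real.pi),
        c^2 * ‖px.eval (Complex.exp (θ * Complex.I))‖ ^ 2 := by
    refine intervalIntegral.integral_mono_on (by positivity) hint1 hint2 fun θ _ => ?_
    rw [norm_mul, mul_pow]
    calc ‖px.eval (Complex.exp (θ * Complex.I))‖^2 * ‖pg.eval (Complex.exp (θ * Complex.I))‖^2
        ≤ ‖px.eval (Complex.exp (θ * Complex.I))‖^2 * c^2 :=
          mul_le_mul_of_nonneg_left (pow_le_pow_left₀ (norm_nonneg _) (hbd θ) 2)
            (by positivity)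
      _ = c^2 * ‖px.eval (Complex.exp (θ * Complex.I))‖^2 := by ring
  have hconst : (∫ θ : ℝ in (0:ℝ)..(2*Real.pi),
      c^2 * ‖px.eval (Complex.exp (θ * Complex.I))‖ ^ 2)
      = c^2 * (2 * Real.pi * ∑ k ∈ Finset.range T, ‖b k‖ ^ 2) := by
    rw [intervalIntegral.integral_const_mul, hpar_x]
  have hxsum : ∑ k ∈ Finset.range T, ‖b k‖ ^ 2 = ∑ j, x j ^ 2 := by
    rw [← Fin.sum_univ_eq_sum_range (fun k => ‖b k‖^2) T]
    refine Finset.sum_congr rfl fun j _ => ?_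
    simp [hb, Fin.is_lt, Complex.norm_real, Real.norm_eq_abs, _root_.sq_abs]
  have hysum : ∑ i, ((toep g) *ᵥ x) i ^ 2 = ∑ i ∈ Finset.range T, ‖q.coeff i‖ ^ 2 := by
    rw [← Fin.sum_univ_eq_sum_range (fun i => ‖q.coeff i‖^2) T]
    refine Finset.sum_congr rfl fun i _ => ?_
    rw [hqco i]
    simp [Complex.norm_real, Real.norm_eq_abs, _root_.sq_abs]
  have hsub : ∑ i ∈ Finset.range T, ‖q.coeff i‖ ^ 2
      ≤ ∑ i ∈ Finset.range (2*T), ‖q.coeff i‖ ^ 2 :=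
    Finset.sum_le_sum_of_subset_of_nonneg (Finset.range_subset_range.mpr (by omega))
      (fun _ _ _ => by positivity)
  have hfinal : 2 * Real.pi * (∑ i, ((toep g) *ᵥ x) i ^ 2)
      ≤ 2 * Real.pi * (c^2 * ∑ j, x j ^ 2) := by
    calc 2 * Real.pi * (∑ i, ((toep g) *ᵥ x) i ^ 2)
        = 2 * Real.pi * ∑ i ∈ Finset.range T, ‖q.coeff i‖ ^ 2 := by rw [hysum]
      _ ≤ 2 * Real.pi * ∑ i ∈ Finset.range (2*T), ‖q.coeff i‖ ^ 2 := by
          have := Real.two_pi_pos; nlinarith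
      _ = ∫ θ : ℝ in (0:ℝ)..(2*Real.pi),
            ‖px.eval (Complex.exp (θ * Complex.I)) *
              pg.eval (Complex.exp (θ * Complex.I))‖ ^ 2 := hpar_q.symm
      _ ≤ ∫ θ : ℝ in (0:ℝ)..(2*Real.pi),
            c^2 * ‖px.eval (Complex.exp (θ * Complex.I))‖ ^ 2 := hmono
      _ = c^2 * (2 * Real.pi * ∑ k ∈ Finset.range T, ‖b k‖ ^ 2) := hconst
      _ = 2 * Real.pi * (c^2 * ∑ j, x j ^ 2) := by rw [hxsum]; ring
  exact (mul_le_mul_iff_right₀ Real.two_pi_pos).mp hfinal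

lemma key_toepT {T : ℕ} (g y : Fin T → ℝ) :
    ∑ i, (((toep g)ᵀ) *ᵥ y) i ^ 2 ≤ hinfNormTF (firTF0 g) ^ 2 * ∑ j, y j ^ 2 := by
  set c := hinfNormTF (firTF0 g) with hcdef
  have hc0 : 0 ≤ c := hinf_nonneg g
  set v : Fin T → ℝ := (toep g)ᵀ *ᵥ y with hv
  have hS0 : 0 ≤ ∑ i, v i ^ 2 := Finset.sum_nonneg fun i _ => sq_nonneg _
  have hy0 : 0 ≤ ∑ j, y j ^ 2 := Finset.sum_nonneg fun i _ => sq_nonneg _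
  have hdot : ∑ i, v i ^ 2 = ∑ i, y i * ((toep g *ᵥ v) i) := by
    have h1 : ∑ i, v i ^ 2 = v ⬝ᵥ v := by
      simp [dotProduct, sq]
    have h2 : y ⬝ᵥ (toep g *ᵥ v) = v ⬝ᵥ v := by
      rw [Matrix.dotProduct_mulVec, ← Matrix.mulVec_transpose, ← hv]
    rw [h1, ← h2]
    rfl
  have hcs : (∑ i, y i * ((toep g *ᵥ v) i)) ^ 2
      ≤ (∑ i, y i ^ 2) * ∑ i, ((toep g *ᵥ v) i) ^ 2 :=
    Finset.sum_mul_sq_le_sq_mul_sq _ _ _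
  have hkey := key_toep g v
  have hfin : (∑ i, v i ^ 2) ^ 2 ≤ (∑ j, y j ^ 2) * (c ^ 2 * ∑ i, v i ^ 2) := by
    conv_lhs => rw [hdot]
    exact le_trans hcs (mul_le_mul_of_nonneg_left hkey hy0)
  nlinarith [hS0, hy0, hfin, sq_nonneg c, mul_nonneg (sq_nonneg c) hy0]

lemma specNorm_le_of_bound {T : ℕ} (M : Matrix (Fin T) (Fin T) ℝ) (c : ℝ) (hc : 0 ≤ c)
    (h : ∀ x : Fin T → ℝ, ∑ i, (M *ᵥ x) i ^ 2 ≤ c ^ 2 * ∑ j, x j ^ 2) :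
    ‖LinearMap.toContinuousLinearMap (Matrix.toEuclideanLin M)‖ ≤ c := by
  refine ContinuousLinearMap.opNorm_le_bound _ hc fun x => ?_
  rw [LinearMap.coe_toContinuousLinearMap']
  have hx : ‖Matrix.toEuclideanLin M x‖
      = Real.sqrt (∑ i, ((M *ᵥ (WithLp.equiv 2 (Fin T → ℝ)) x) i) ^ 2) := by
    rw [Matrix.toEuclideanLin_apply, EuclideanSpace.norm_eq]
    congr 1
    refine Finset.sum_congr rfl fun i _ => ?_
    rw [Real.norm_eq_abs, _root_.sq_abs]
    rfl
  have hx2 : ‖x‖ = Real.sqrt (∑ j, ((WithLp.equiv 2 (Fin T → ℝ)) x j) ^ 2) := by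
    rw [EuclideanSpace.norm_eq]
    congr 1
    refine Finset.sum_congr rfl fun i _ => ?_
    rw [Real.norm_eq_abs, _root_.sq_abs]
    rfl
  rw [hx, hx2]
  calc Real.sqrt (∑ i, ((M *ᵥ (WithLp.equiv 2 (Fin T → ℝ)) x) i) ^ 2)
      ≤ Real.sqrt (c ^ 2 * ∑ j, ((WithLp.equiv 2 (Fin T → ℝ)) x j) ^ 2) :=
        Real.sqrt_le_sqrt (h _)
    _ = c * Real.sqrt (∑ j, ((WithLp.equiv 2 (Fin T → ℝ)) x j) ^ 2) := by
        rw [Real.sqrt_mul (sq_nonneg c), Real.sqrt_sq hc]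

end Aux

/-- for a stable, strictly proper FIR SISO plant `G` with impulse
response `g_{0:T−1}`, the covariance
`Λ = (Z_matᵀZ_mat)⁻¹Z_matᵀ(σ_w²·Toep(g)Toep(g)ᵀ + σ_ξ²·I)Z_mat(Z_matᵀZ_mat)⁻¹`
satisfies `Λ ⪯ (σ_w²‖G‖² + σ_ξ²)·(Z_matᵀZ_mat)⁻¹` in the Loewner order; in particular
`‖Toep(g)‖ ≤ ‖G‖`. -/
theorem statement_18 (T mE : ℕ) (g0 : Fin T → ℝ) (u : Fin mE → Fin T → ℝ)
    (hstable : StableTF (firTF0 g0)) (hsp : StrictlyProperTF (firTF0 g0))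
    (hinv : IsUnit (ZtZ u).det)
    (σw σξ : ℝ) (hw : 0 ≤ σw) (hξ : 0 ≤ σξ) :
    ((σw ^ 2 * hinfNormTF (firTF0 g0) ^ 2 + σξ ^ 2) • (ZtZ u)⁻¹ -
      (ZtZ u)⁻¹ * (Zmat u)ᵀ *
        (σw ^ 2 • (bigToep g0 * (bigToep g0)ᵀ) +
          σξ ^ 2 • (1 : Matrix (Fin mE × Fin T) (Fin mE × Fin T) ℝ)) *
        Zmat u * (ZtZ u)⁻¹).PosSemidef ∧
    specNorm (toep g0) ≤ hinfNormTF (firTF0 g0) := by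
  have hc0 : 0 ≤ hinfNormTF (firTF0 g0) := hinf_nonneg g0
  set c := hinfNormTF (firTF0 g0) with hcdef
  constructor
  · set B : Matrix (Fin mE × Fin T) (Fin mE × Fin T) ℝ := bigToep g0 with hB
    set W : Matrix (Fin mE × Fin T) (Fin mE × Fin T) ℝ :=
      σw ^ 2 • (B * Bᵀ) + σξ ^ 2 • (1 : Matrix (Fin mE × Fin T) (Fin mE × Fin T) ℝ) with hW
    set c' : ℝ := σw ^ 2 * c ^ 2 + σξ ^ 2 with hc'
    -- quadratic form bound for bigToep transpose
    have hBt : ∀ (x : Fin mE × Fin T → ℝ) (k : Fin mE) (t : Fin T),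
        (Bᵀ *ᵥ x) (k, t) = ((toep g0)ᵀ *ᵥ fun s => x (k, s)) t := by
      intro x k t
      have hent : ∀ (l : Fin mE) (s : Fin T),
          Bᵀ (k, t) (l, s) = if l = k then toep g0 s t else 0 := by
        intro l s
        rw [Matrix.transpose_apply, hB, bigToep]
        rfl
      calc (Bᵀ *ᵥ x) (k, t) = ∑ p : Fin mE × Fin T, Bᵀ (k, t) p * x p := rfl
        _ = ∑ l : Fin mE, ∑ s : Fin T, (if l = k then toep g0 s t else 0) * x (l, s) := by
            rw [Fintype.sum_prod_type]
            exact Finset.sum_congr rfl fun l _ => Finset.sum_congr rfl fun s _ => by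
              rw [hent]
        _ = ∑ s : Fin T, toep g0 s t * x (k, s) := by
            rw [Finset.sum_eq_single k]
            · simp
            · intro l _ hl; simp [hl]
            · intro h; exact absurd (Finset.mem_univ k) h
        _ = ((toep g0)ᵀ *ᵥ fun s => x (k, s)) t := by
            simp [Matrix.mulVec, dotProduct, Matrix.transpose_apply]
    have hquad : ∀ x : Fin mE × Fin T → ℝ,
        ∑ p, (Bᵀ *ᵥ x) p ^ 2 ≤ c ^ 2 * ∑ p, x p ^ 2 := by
      intro x
      rw [Fintype.sum_prod_type (f := fun p => (Bᵀ *ᵥ x) p ^ 2),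
        Fintype.sum_prod_type (f := fun p => x p ^ 2)]
      calc ∑ k, ∑ t, (Bᵀ *ᵥ x) (k, t) ^ 2
          = ∑ k : Fin mE, ∑ t : Fin T, (((toep g0)ᵀ *ᵥ fun s => x (k, s)) t) ^ 2 := by
            refine Finset.sum_congr rfl fun k _ => Finset.sum_congr rfl fun t _ => ?_
            rw [hBt]
        _ ≤ ∑ k : Fin mE, c ^ 2 * ∑ s : Fin T, x (k, s) ^ 2 :=
            Finset.sum_le_sum fun k _ => key_toepT g0 _
        _ = c ^ 2 * ∑ k : Fin mE, ∑ s : Fin T, x (k, s) ^ 2 := by rw [Finset.mul_sum]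
    have hpsd1 : (c' • (1 : Matrix (Fin mE × Fin T) (Fin mE × Fin T) ℝ) - W).PosSemidef := by
      refine Matrix.PosSemidef.of_dotProduct_mulVec_nonneg ?_ ?_
      · show (c' • (1 : Matrix (Fin mE × Fin T) (Fin mE × Fin T) ℝ) - W)ᴴ = _
        have hct : (c' • (1 : Matrix (Fin mE × Fin T) (Fin mE × Fin T) ℝ) - W)ᴴ
            = (c' • (1 : Matrix (Fin mE × Fin T) (Fin mE × Fin T) ℝ) - W)ᵀ := rfl
        rw [hct, Matrix.transpose_sub, Matrix.transpose_smul, Matrix.transpose_one, hW,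
          Matrix.transpose_add, Matrix.transpose_smul, Matrix.transpose_smul,
          Matrix.transpose_one, Matrix.transpose_mul, Matrix.transpose_transpose]
      · intro x
        have hstar : star x = x := funext fun p => rfl
        rw [hstar, Matrix.sub_mulVec, dotProduct_sub, hW, Matrix.add_mulVec,
          dotProduct_add, Matrix.smul_mulVec, Matrix.smul_mulVec,
          Matrix.smul_mulVec, Matrix.one_mulVec, dotProduct_smul,
          dotProduct_smul, dotProduct_smul]
        simp only [smul_eq_mul]
        have hq1 : x ⬝ᵥ ((B * Bᵀ) *ᵥ x) = ∑ p, (Bᵀ *ᵥ x) p ^ 2 := by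
          rw [← Matrix.mulVec_mulVec, Matrix.dotProduct_mulVec, ← Matrix.mulVec_transpose]
          simp [dotProduct, sq]
        have hxx : x ⬝ᵥ x = ∑ p, x p ^ 2 := by simp [dotProduct, sq]
        have h2 := hquad x
        have hxx0 : 0 ≤ ∑ p, x p ^ 2 := Finset.sum_nonneg fun p _ => sq_nonneg _
        rw [hq1, hxx]
        have h3 := mul_le_mul_of_nonneg_left h2 (sq_nonneg σw)
        rw [hc']
        nlinarith [sq_nonneg σξ]
    have hZs : (ZtZ u)ᵀ = ZtZ u := by
      rw [ZtZ, Matrix.transpose_mul, Matrix.transpose_transpose]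
    have hinvs : ((ZtZ u)⁻¹)ᵀ = (ZtZ u)⁻¹ := by
      rw [Matrix.transpose_nonsing_inv, hZs]
    set M : Matrix (Fin mE × Fin T) (Fin T) ℝ := Zmat u * (ZtZ u)⁻¹ with hM
    have hpsd2 := hpsd1.conjTranspose_mul_mul_same M
    have hMH : Mᴴ = (ZtZ u)⁻¹ * (Zmat u)ᵀ := by
      have h0 : Mᴴ = Mᵀ := rfl
      rw [h0, hM, Matrix.transpose_mul, hinvs]
    have hMM : (ZtZ u)⁻¹ * (Zmat u)ᵀ * (Zmat u * (ZtZ u)⁻¹) = (ZtZ u)⁻¹ := by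
      rw [← Matrix.mul_assoc, Matrix.mul_assoc ((ZtZ u)⁻¹) (Zmat u)ᵀ (Zmat u)]
      have h0 : (Zmat u)ᵀ * Zmat u = ZtZ u := rfl
      rw [h0, Matrix.nonsing_inv_mul _ hinv, Matrix.one_mul]
    have hfinal : c' • (ZtZ u)⁻¹ - (ZtZ u)⁻¹ * (Zmat u)ᵀ * W * Zmat u * (ZtZ u)⁻¹
        = Mᴴ * (c' • (1 : Matrix (Fin mE × Fin T) (Fin mE × Fin T) ℝ) - W) * M := by
      rw [hMH, hM, Matrix.mul_sub, Matrix.sub_mul]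
      congr 1
      · rw [Matrix.mul_smul, Matrix.mul_one, Matrix.smul_mul, hMM]
      · rw [Matrix.mul_assoc ((ZtZ u)⁻¹ * (Zmat u)ᵀ * W) (Zmat u) ((ZtZ u)⁻¹)]
    rw [hfinal]
    exact hpsd2
  · exact specNorm_le_of_bound (toep g0) c hc0 fun x => key_toep g0 x
end
end
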